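/- arXiv:2102.06461 — 3 statements merged into one kernel-verified Lean document; each statement's English description precedes it below -/
import Mathlib

section
/- (Case m = 1, formula T̂^{(0)}_{1,n}.) For every μ > 0, lim_{n→∞} n^μ · ( h ∑_{j=1}^{n−1} f(t + jh) + g′(t) h − I[f] ) = 0, where h = T/n. -/
open Real Filter MeasureTheory Finset
open intervalIntegral


lemma periodic_iteratedDeriv {ψ : ℝ → ℝ} {c : ℝ} (hp : Function.Periodic ψ c) (m : ℕ) :
    Function.Periodic (iteratedDeriv m ψ) c := by
  induction m with
  | zero => simpa using hp
  | succ m ih =>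
    intro x
    rw [iteratedDeriv_succ]
    have hfun : iteratedDeriv m ψ = fun y => iteratedDeriv m ψ (y + c) :=
      funext fun y => (ih y).symm
    calc deriv (iteratedDeriv m ψ) (x + c)
        = deriv (fun y => iteratedDeriv m ψ (y + c)) x := by
          rw [deriv_comp_add_const]
      _ = deriv (iteratedDeriv m ψ) x := by rw [← hfun]

lemma periodic_bound {u : ℝ → ℝ} {c : ℝ} (hc : 0 < c) (hu : Continuous u)
    (hp : Function.Periodic u c) : ∃ M, 0 ≤ M ∧ ∀ x, |u x| ≤ M := by
  obtain ⟨M, hM⟩ := (isCompact_Icc (a := (0:ℝ)) (b := c)).exists_bound_of_continuousOn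
    hu.continuousOn
  refine ⟨M, le_trans (abs_nonneg _) (by simpa using hM 0 ⟨le_refl _, hc.le⟩), fun x => ?_⟩
  obtain ⟨y, hy, hxy⟩ := hp.exists_mem_Ico₀ hc x
  rw [hxy]
  simpa using hM y ⟨hy.1, hy.2.le⟩


lemma em_invariant {h : ℝ} (hh : 0 < h) {ψ : ℝ → ℝ} (hψ : ContDiff ℝ (⊤ : ℕ∞) ψ)
    (hp : Function.Periodic ψ h) :
    ∀ m : ℕ, 1 ≤ m → ∃ p : ℝ → ℝ, Continuous p ∧ (∀ s ∈ Set.Icc 0 h, |p s| ≤ (2*h)^m) ∧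
      (∫ s in (0:ℝ)..h, p s) = 0 ∧
      h * ψ 0 - (∫ s in (0:ℝ)..h, ψ s) = ∫ s in (0:ℝ)..h, p s * iteratedDeriv m ψ s := by
  have hdiff : ∀ k : ℕ, Differentiable ℝ (iteratedDeriv k ψ) := by
    intro k
    exact hψ.differentiable_iteratedDeriv k (by norm_cast; exact WithTop.natCast_lt_top k)
  have hcont : ∀ k : ℕ, Continuous (iteratedDeriv k ψ) := fun k => (hdiff k).continuous
  have hpm : ∀ k : ℕ, Function.Periodic (iteratedDeriv k ψ) h := fun k =>
    periodic_iteratedDeriv hp k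
  have hintzero : ∀ k : ℕ, (∫ s in (0:ℝ)..h, iteratedDeriv (k+1) ψ s) = 0 := by
    intro k
    rw [iteratedDeriv_succ]
    rw [integral_deriv_eq_sub (fun x _ => (hdiff k).differentiableAt)
      (by rw [← iteratedDeriv_succ]; exact (hcont (k+1)).intervalIntegrable _ _)]
    have := hpm k 0
    simp only [zero_add] at this
    rw [this, sub_self]
  refine Nat.le_induction ?_ ?_
  · -- base case m = 1
    refine ⟨fun s => s - h/2, by continuity, ?_, ?_, ?_⟩
    · intro s hs
      rw [pow_one]
      rw [abs_le]
      constructor <;> [nlinarith [hs.1, hs.2]; nlinarith [hs.1, hs.2]]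
    · rw [integral_sub intervalIntegrable_id (intervalIntegrable_const)]
      rw [integral_id, intervalIntegral.integral_const]
      simp
      ring
    · have hψh : ψ h = ψ 0 := by simpa using hp 0
      have key := integral_mul_deriv_eq_deriv_mul (a := (0:ℝ)) (b := h)
        (u := fun s => s - h/2) (u' := fun _ => (1:ℝ)) (v := ψ) (v' := deriv ψ)
        (fun x _ => (hasDerivAt_id x).sub_const _)
        (fun x _ => ((hψ.differentiable (by norm_cast)) x).hasDerivAt)
        (intervalIntegrable_const)
        (by rw [← iteratedDeriv_one (f := ψ)]; exact (hcont 1).intervalIntegrable _ _)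
      rw [iteratedDeriv_one]
      rw [key]
      simp only [one_mul]
      rw [hψh]
      ring
  · -- inductive step
    rintro m hm ⟨p, pc, pbound, pint, pid⟩
    set P : ℝ → ℝ := fun s => ∫ r in (0:ℝ)..s, p r with hP
    have hPderiv : ∀ x : ℝ, HasDerivAt P (p x) x := by
      intro x
      exact integral_hasDerivAt_right (pc.intervalIntegrable _ _)
        (pc.stronglyMeasurableAtFilter _ _) pc.continuousAt
    have hPcont : Continuous P := by
      refine continuous_iff_continuousAt.2 fun x => (hPderiv x).continuousAt
    have hP0 : P 0 = 0 := integral_same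
    have hPh : P h = 0 := pint
    have hPbound : ∀ s ∈ Set.Icc (0:ℝ) h, |P s| ≤ (2*h)^m * h := by
      intro s hs
      have : ‖∫ r in (0:ℝ)..s, p r‖ ≤ (2*h)^m * |s - 0| := by
        refine norm_integral_le_of_norm_le_const ?_
        intro x hx
        rw [Set.uIoc_of_le hs.1] at hx
        exact pbound x ⟨hx.1.le, hx.2.trans hs.2⟩
      rw [Real.norm_eq_abs] at this
      refine this.trans ?_
      rw [sub_zero, abs_of_nonneg hs.1]
      have h2h : (0:ℝ) ≤ (2*h)^m := by positivity
      nlinarith [hs.2]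
    set c : ℝ := (∫ s in (0:ℝ)..h, P s) / h with hc
    have hcabs : |c| ≤ (2*h)^m * h := by
      have : ‖∫ s in (0:ℝ)..h, P s‖ ≤ ((2*h)^m * h) * |h - 0| := by
        refine norm_integral_le_of_norm_le_const ?_
        intro x hx
        rw [Set.uIoc_of_le hh.le] at hx
        exact hPbound x ⟨hx.1.le, hx.2⟩
      rw [Real.norm_eq_abs, sub_zero, abs_of_nonneg hh.le] at this
      rw [hc, abs_div, abs_of_nonneg hh.le, div_le_iff₀ hh]
      calc |∫ s in (0:ℝ)..h, P s| ≤ (2*h)^m * h * h := this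
        _ = (2*h)^m * h * h := rfl
    refine ⟨fun s => c - P s, by continuity, ?_, ?_, ?_⟩
    · intro s hs
      have h1 := hPbound s hs
      have h2 : |c - P s| ≤ |c| + |P s| := abs_sub _ _
      have : |c - P s| ≤ (2*h)^m * h + (2*h)^m * h := by
        refine h2.trans (add_le_add hcabs h1)
      refine this.trans ?_
      rw [pow_succ]
      have h2h : (0:ℝ) ≤ (2*h)^m := by positivity
      nlinarith
    · rw [integral_sub intervalIntegrable_const (hPcont.intervalIntegrable _ _)]
      rw [intervalIntegral.integral_const]
      simp only [smul_eq_mul, sub_zero]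
      rw [hc]
      field_simp
      ring
    · -- the identity
      have ibp := integral_mul_deriv_eq_deriv_mul (a := (0:ℝ)) (b := h)
        (u := P) (u' := p) (v := iteratedDeriv m ψ) (v' := iteratedDeriv (m+1) ψ)
        (fun x _ => hPderiv x)
        (fun x _ => by
          have := ((hdiff m) x).hasDerivAt
          rwa [← iteratedDeriv_succ] at this)
        (pc.intervalIntegrable _ _)
        ((hcont (m+1)).intervalIntegrable _ _)
      -- ibp : ∫ P * D^{m+1} = P h * Dm h - P 0 * Dm 0 - ∫ p * Dm
      rw [hPh, hP0, zero_mul, zero_mul, sub_zero, zero_sub] at ibp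
      have e1 : (∫ s in (0:ℝ)..h, (c - P s) * iteratedDeriv (m+1) ψ s)
          = c * (∫ s in (0:ℝ)..h, iteratedDeriv (m+1) ψ s)
            - ∫ s in (0:ℝ)..h, P s * iteratedDeriv (m+1) ψ s := by
        rw [← intervalIntegral.integral_const_mul]
        rw [← integral_sub (f := fun s => c * iteratedDeriv (m+1) ψ s)
          (g := fun s => P s * iteratedDeriv (m+1) ψ s)
          ((continuous_const.mul (hcont (m+1))).intervalIntegrable _ _)
          ((hPcont.mul (hcont (m+1))).intervalIntegrable _ _)]
        congr 1
        ext s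
        ring
      rw [e1, hintzero m, mul_zero, zero_sub, ibp, neg_neg, ← pid]

lemma quad_error {T : ℝ} (hT : 0 < T) {φ : ℝ → ℝ} (hφ : ContDiff ℝ (⊤ : ℕ∞) φ)
    (hp : Function.Periodic φ T) (m : ℕ) (hm : 1 ≤ m) :
    ∃ C, 0 ≤ C ∧ ∀ n : ℕ, 1 ≤ n →
      |(T/n) * (∑ j ∈ Finset.range n, φ (j*(T/n))) - ∫ x in (0:ℝ)..T, φ x| ≤ C / n^m := by
  have hdiff : ∀ k : ℕ, Differentiable ℝ (iteratedDeriv k φ) := fun k =>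
    hφ.differentiable_iteratedDeriv k (by norm_cast; exact WithTop.natCast_lt_top k)
  have hcont : ∀ k : ℕ, Continuous (iteratedDeriv k φ) := fun k => (hdiff k).continuous
  obtain ⟨M, hM0, hM⟩ := periodic_bound hT (hcont m) (periodic_iteratedDeriv hp m)
  refine ⟨2^m * T^(m+1) * M, by positivity, fun n hn => ?_⟩
  have hn0 : (0:ℝ) < n := by exact_mod_cast hn
  have hne : (n:ℝ) ≠ 0 := ne_of_gt hn0
  set h : ℝ := T / n with hdef
  have hh : 0 < h := div_pos hT hn0
  have hnh : (n:ℝ) * h = T := by rw [hdef]; field_simp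
  set Φ : ℝ → ℝ := fun s => ∑ j ∈ Finset.range n, φ (s + j * h) with hΦdef
  have hΦsm : ContDiff ℝ (⊤ : ℕ∞) Φ := by
    refine ContDiff.sum fun j _ => ?_
    exact hφ.comp (contDiff_id.add contDiff_const)
  have hΦper : Function.Periodic Φ h := by
    intro s
    show (∑ j ∈ Finset.range n, φ (s + h + (j:ℝ) * h)) = ∑ j ∈ Finset.range n, φ (s + (j:ℝ) * h)
    have step : ∀ j : ℕ, φ (s + h + j * h) = φ (s + (j+1) * h) := by
      intro j; congr 1; push_cast; ring
    calc (∑ j ∈ Finset.range n, φ (s + h + (j:ℝ) * h))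
        = ∑ j ∈ Finset.range n, φ (s + ((j:ℝ)+1) * h) := by
          refine Finset.sum_congr rfl fun j _ => step j
      _ = ∑ j ∈ Finset.range n, (fun k : ℕ => φ (s + (k:ℝ) * h)) (j+1) := by
          refine Finset.sum_congr rfl fun j _ => by push_cast; ring_nf
      _ = (∑ j ∈ Finset.range (n+1), φ (s + (j:ℝ) * h)) - φ (s + (0:ℕ) * h) := by
          rw [Finset.sum_range_succ' (fun k : ℕ => φ (s + (k:ℝ) * h)) n]
          push_cast
          ring
      _ = (∑ j ∈ Finset.range n, φ (s + (j:ℝ) * h)) + φ (s + (n:ℝ) * h) - φ (s + (0:ℕ) * h) := by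
          rw [Finset.sum_range_succ]
      _ = ∑ j ∈ Finset.range n, φ (s + (j:ℝ) * h) := by
          have h2 : φ (s + (n:ℝ) * h) = φ s := by rw [hnh]; exact hp s
          rw [h2]
          push_cast
          simp
  have hΦ0 : Φ 0 = ∑ j ∈ Finset.range n, φ ((j:ℝ) * h) := by
    simp [hΦdef]
  have hΦint : (∫ s in (0:ℝ)..h, Φ s) = ∫ x in (0:ℝ)..T, φ x := by
    show (∫ s in (0:ℝ)..h, ∑ j ∈ Finset.range n, φ (s + (j:ℝ) * h)) = _
    have hint : ∀ j ∈ Finset.range n,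
        IntervalIntegrable (fun s : ℝ => φ (s + (j:ℝ) * h)) volume 0 h := fun j _ =>
      ((hφ.continuous.comp (continuous_id.add continuous_const))).intervalIntegrable _ _
    rw [intervalIntegral.integral_finset_sum hint]
    calc (∑ j ∈ Finset.range n, ∫ s in (0:ℝ)..h, φ (s + (j:ℝ) * h))
        = ∑ j ∈ Finset.range n, ∫ x in (((j:ℕ):ℝ) * h)..((((j:ℕ)+1:ℕ):ℝ) * h), φ x := by
          refine Finset.sum_congr rfl fun j _ => ?_
          rw [intervalIntegral.integral_comp_add_right]
          congr 1
          · push_cast; ring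
          · push_cast; ring
      _ = ∫ x in (((0:ℕ):ℝ) * h)..(((n:ℕ):ℝ) * h), φ x := by
          exact intervalIntegral.sum_integral_adjacent_intervals
            (fun k _ => (hφ.continuous).intervalIntegrable _ _)
      _ = ∫ x in (0:ℝ)..T, φ x := by rw [show (((n:ℕ):ℝ) * h) = T from hnh]; norm_num
  have hΦm : ∀ k : ℕ, iteratedDeriv k Φ
      = fun s => ∑ j ∈ Finset.range n, iteratedDeriv k φ (s + j * h) := by
    intro k
    induction k with
    | zero => funext s; simp [hΦdef]
    | succ k ih =>
      funext s
      rw [iteratedDeriv_succ, ih]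
      have hdA : ∀ j : ℕ, DifferentiableAt ℝ (fun s : ℝ => iteratedDeriv k φ (s + (j:ℝ)*h)) s := by
        intro j
        exact (hdiff k (s + (j:ℝ)*h)).comp s (differentiableAt_id.add_const _)
      rw [deriv_fun_sum (fun j _ => hdA j)]
      refine Finset.sum_congr rfl fun j _ => ?_
      rw [deriv_comp_add_const (iteratedDeriv k φ) ((j:ℝ)*h) s, ← iteratedDeriv_succ]
  obtain ⟨p, pc, pb, pint, pid⟩ := em_invariant hh hΦsm hΦper m hm
  have key : |h * Φ 0 - ∫ s in (0:ℝ)..h, Φ s| ≤ ((2*h)^m * ((n:ℝ)*M)) * h := by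
    rw [pid]
    have := intervalIntegral.norm_integral_le_of_norm_le_const
      (C := (2*h)^m * ((n:ℝ)*M)) (f := fun s => p s * iteratedDeriv m Φ s) (a := (0:ℝ)) (b := h) ?_
    · rw [Real.norm_eq_abs, sub_zero, abs_of_nonneg hh.le] at this
      exact this
    · intro x hx
      rw [Set.uIoc_of_le hh.le] at hx
      have hx' : x ∈ Set.Icc (0:ℝ) h := ⟨hx.1.le, hx.2⟩
      rw [Real.norm_eq_abs, abs_mul]
      have b1 : |p x| ≤ (2*h)^m := pb x hx'
      have b2 : |iteratedDeriv m Φ x| ≤ (n:ℝ) * M := by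
        rw [hΦm m]
        calc |∑ j ∈ Finset.range n, iteratedDeriv m φ (x + j * h)|
            ≤ ∑ j ∈ Finset.range n, |iteratedDeriv m φ (x + j * h)| :=
              Finset.abs_sum_le_sum_abs _ _
          _ ≤ ∑ _j ∈ Finset.range n, M := Finset.sum_le_sum fun j _ => hM _
          _ = (n:ℝ) * M := by rw [Finset.sum_const, Finset.card_range, nsmul_eq_mul]
      exact mul_le_mul b1 b2 (abs_nonneg _) (by positivity)
  have heq : ((2*h)^m * ((n:ℝ)*M)) * h = 2^m * T^(m+1) * M / n^m := by
    rw [hdef]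
    rw [mul_div_assoc, mul_pow, div_pow]
    field_simp
    ring
  calc |(T/n) * (∑ j ∈ Finset.range n, φ (j*(T/n))) - ∫ x in (0:ℝ)..T, φ x|
      = |h * Φ 0 - ∫ s in (0:ℝ)..h, Φ s| := by rw [hΦ0, hΦint]
    _ ≤ ((2*h)^m * ((n:ℝ)*M)) * h := key
    _ = 2^m * T^(m+1) * M / n^m := heq

lemma symm_smooth {g : ℝ → ℝ} (hg : ContDiff ℝ (⊤ : ℕ∞) g) (t : ℝ) :
    ∃ G : ℝ → ℝ, ContDiff ℝ (⊤ : ℕ∞) G ∧ G 0 = 2 * deriv g t ∧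
      ∀ u : ℝ, u ≠ 0 → G u = (g (t+u) - g (t-u))/u := by
  have hgd : ∀ k : ℕ, Differentiable ℝ (iteratedDeriv k g) := fun k =>
    hg.differentiable_iteratedDeriv k (by norm_cast; exact WithTop.natCast_lt_top k)
  have hgc : ∀ k : ℕ, Continuous (iteratedDeriv k g) := fun k => (hgd k).continuous
  set G : ℕ → ℝ → ℝ := fun m u => ∫ s in (-1:ℝ)..1, s^m * iteratedDeriv (m+1) g (t + s*u)
    with hGdef
  have hFcont : ∀ (m : ℕ) (x : ℝ), Continuous (fun s : ℝ => s^m * iteratedDeriv (m+1) g (t + s*x)) := by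
    intro m x
    exact (continuous_pow m).mul ((hgc (m+1)).comp (continuous_const.add (continuous_id.mul continuous_const)))
  have hasD : ∀ (m : ℕ) (x₀ : ℝ), HasDerivAt (G m) (G (m+1) x₀) x₀ := by
    intro m x₀
    obtain ⟨C, hC⟩ := (isCompact_Icc (a := t - (|x₀|+1)) (b := t + (|x₀|+1))).exists_bound_of_continuousOn
      ((hgc (m+2)).continuousOn)
    have key := intervalIntegral.hasDerivAt_integral_of_dominated_loc_of_deriv_le
      (F := fun (x : ℝ) (s : ℝ) => s^m * iteratedDeriv (m+1) g (t + s*x))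
      (F' := fun (x : ℝ) (s : ℝ) => s^(m+1) * iteratedDeriv (m+2) g (t + s*x))
      (x₀ := x₀) (a := -1) (b := 1) (bound := fun _ => |C|) (μ := volume) (s := Metric.ball x₀ 1) (Metric.ball_mem_nhds x₀ one_pos)
      ?_ ?_ ?_ ?_ ?_ ?_
    · exact key.2
    · exact Eventually.of_forall fun x => (hFcont m x).aestronglyMeasurable
    · exact (hFcont m x₀).intervalIntegrable _ _
    · exact (hFcont (m+1) x₀).aestronglyMeasurable
    · refine Eventually.of_forall fun s => fun hs x hx => ?_
      rw [Set.uIoc_of_le (by norm_num : (-1:ℝ) ≤ 1)] at hs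
      have hs1 : |s| ≤ 1 := by
        rw [abs_le]; exact ⟨hs.1.le, hs.2⟩
      have hx1 : |x| ≤ |x₀| + 1 := by
        rw [Metric.mem_ball, Real.dist_eq] at hx
        have := abs_sub_abs_le_abs_sub x x₀
        linarith
      have harg : t + s*x ∈ Set.Icc (t - (|x₀|+1)) (t + (|x₀|+1)) := by
        have : |s*x| ≤ |x₀| + 1 := by
          rw [abs_mul]
          calc |s| * |x| ≤ 1 * (|x₀|+1) :=
            mul_le_mul hs1 hx1 (abs_nonneg _) zero_le_one
          _ = |x₀| + 1 := one_mul _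
        rw [abs_le] at this
        constructor <;> [linarith [this.1]; linarith [this.2]]
      have hCb := hC _ harg
      rw [Real.norm_eq_abs] at hCb ⊢
      rw [abs_mul, abs_pow]
      calc |s|^(m+1) * |iteratedDeriv (m+2) g (t + s*x)| ≤ 1 * |C| := by
            refine mul_le_mul (pow_le_one₀ (abs_nonneg _) hs1) (hCb.trans (le_abs_self C))
              (abs_nonneg _) zero_le_one
        _ = |C| := one_mul _
    · exact intervalIntegrable_const
    · refine Eventually.of_forall fun s => fun hs x hx => ?_
      have h1 : HasDerivAt (fun x : ℝ => t + s*x) s x := by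
        simpa using ((hasDerivAt_id x).const_mul s).const_add t
      have h2 : HasDerivAt (iteratedDeriv (m+1) g) (iteratedDeriv (m+2) g (t+s*x)) (t+s*x) := by
        have h3 := (hgd (m+1) (t+s*x)).hasDerivAt
        rwa [← iteratedDeriv_succ] at h3
      have h4 := (h2.comp x h1).const_mul (s^m)
      have h5 : s^m * (iteratedDeriv (m+2) g (t+s*x) * s) = s^(m+1) * iteratedDeriv (m+2) g (t+s*x) := by
        ring
      rw [h5] at h4
      exact h4
  have hsmooth : ∀ (N : ℕ) (m : ℕ), ContDiff ℝ (N : WithTop ℕ∞) (G m) := by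
    intro N
    induction N with
    | zero =>
      intro m
      have hc : Continuous (G m) :=
        continuous_iff_continuousAt.2 fun x => (hasD m x).differentiableAt.continuousAt
      simpa using (contDiff_zero (𝕜 := ℝ)).mpr hc
    | succ N ih =>
      intro m
      have hcast : ((N+1:ℕ) : WithTop ℕ∞) = (N : WithTop ℕ∞) + 1 := by push_cast; ring
      rw [hcast, contDiff_succ_iff_deriv]
      refine ⟨fun x => (hasD m x).differentiableAt, by simp, ?_⟩
      have hder : deriv (G m) = G (m+1) := funext fun x => (hasD m x).deriv
      rw [hder]
      exact ih (m+1)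
  refine ⟨G 0, ?_, ?_, ?_⟩
  · rw [contDiff_infty]
    intro n
    exact_mod_cast hsmooth n 0
  · rw [hGdef]
    simp only [pow_zero, one_mul, mul_zero, add_zero, iteratedDeriv_one]
    rw [intervalIntegral.integral_const]
    norm_num
  · intro u hu
    rw [hGdef]
    simp only [pow_zero, one_mul, Nat.zero_add, iteratedDeriv_one]
    have hFTC : ∀ x ∈ Set.uIcc (-1:ℝ) 1, HasDerivAt (fun s => g (t + s*u)/u) (deriv g (t + x*u)) x := by
      intro x _
      have h1 : HasDerivAt (fun s : ℝ => t + s*u) u x := by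
        simpa using ((hasDerivAt_id x).mul_const u).const_add t
      have h2 : HasDerivAt g (deriv g (t + x*u)) (t + x*u) :=
        ((hg.differentiable (by norm_cast)) (t + x*u)).hasDerivAt
      have h3 := (h2.comp x h1).div_const u
      have h4 : deriv g (t + x*u) * u / u = deriv g (t + x*u) := by
        field_simp
      rwa [h4] at h3
    have hderc : Continuous (deriv g) := by
      rw [← iteratedDeriv_one]; exact hgc 1
    have hint : IntervalIntegrable (fun x : ℝ => deriv g (t + x*u)) volume (-1) 1 :=
      (hderc.comp (continuous_const.add (continuous_id.mul continuous_const))).intervalIntegrable _ _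
    have := intervalIntegral.integral_eq_sub_of_hasDerivAt hFTC hint
    rw [this]
    have e1 : t + (1:ℝ)*u = t + u := by ring
    have e2 : t + (-1:ℝ)*u = t - u := by ring
    rw [e1, e2]
    ring

lemma F_exists (a b t T : ℝ) (hab : a < b) (hT : T = b - a) (ht : t ∈ Set.Ioo a b)
    (f g : ℝ → ℝ) (hper : ∀ x, f (x + T) = f x)
    (hf : ContDiffOn ℝ (⊤ : ℕ∞) f {x : ℝ | ∀ k : ℤ, x ≠ t + k * T})
    (hg : ContDiff ℝ (⊤ : ℕ∞) g)
    (hfg : ∀ x ∈ Set.Icc a b, x ≠ t → f x = g x / (x - t) ^ 1) :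
    ∃ F : ℝ → ℝ, ContDiff ℝ (⊤ : ℕ∞) F ∧ Function.Periodic F T ∧
      F 0 = 2 * deriv g t ∧ (∀ u : ℝ, 0 < u → u < T → F u = f (t+u) + f (t-u)) := by
  classical
  have hT0 : 0 < T := by rw [hT]; linarith
  have hta : a < t := ht.1
  have htb : t < b := ht.2
  set F : ℝ → ℝ := fun u => if (∃ k : ℤ, u = (k:ℝ)*T) then 2 * deriv g t else f (t+u) + f (t-u)
    with hFdef
  have no_mult : ∀ u : ℝ, 0 < u → u < T → ¬∃ k : ℤ, u = (k:ℝ)*T := by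
    rintro u h0 h1 ⟨k, rfl⟩
    rcases le_or_gt k 0 with hk | hk
    · have : (k:ℝ) ≤ 0 := by exact_mod_cast hk
      nlinarith
    · have : (1:ℝ) ≤ (k:ℝ) := by exact_mod_cast hk
      nlinarith
  have hFeq : ∀ u : ℝ, 0 < u → u < T → F u = f (t+u) + f (t-u) := by
    intro u h0 h1
    rw [hFdef]
    simp only
    rw [if_neg (no_mult u h0 h1)]
  have hF0 : F 0 = 2 * deriv g t := by
    rw [hFdef]
    simp only
    rw [if_pos ⟨0, by norm_num⟩]
  have hFper : Function.Periodic F T := by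
    intro u
    by_cases hc : ∃ k : ℤ, u = (k:ℝ)*T
    · obtain ⟨k, rfl⟩ := hc
      rw [hFdef]
      simp only
      rw [if_pos ⟨k+1, by push_cast; ring⟩, if_pos ⟨k, rfl⟩]
    · have hc2 : ¬∃ k : ℤ, u + T = (k:ℝ)*T := by
        rintro ⟨k, hk⟩
        exact hc ⟨k-1, by push_cast at hk ⊢; linarith⟩
      rw [hFdef]
      simp only
      rw [if_neg hc2, if_neg hc]
      have e1 : f (t + (u+T)) = f (t+u) := by
        have h1 := hper (t+u)
        have h2 : t + u + T = t + (u+T) := by ring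
        rw [h2] at h1
        exact h1
      have e2 : f (t - (u+T)) = f (t-u) := by
        have h1 := hper (t - (u+T))
        have h2 : t - (u+T) + T = t - u := by ring
        rw [h2] at h1
        exact h1.symm
      rw [e1, e2]
  -- smoothness
  obtain ⟨G, hGsm, hG0, hGu⟩ := symm_smooth hg t
  set δ : ℝ := min (t - a) (b - t) with hδdef
  have hδ0 : 0 < δ := lt_min (by linarith) (by linarith)
  have hδa : δ ≤ t - a := min_le_left _ _
  have hδb : δ ≤ b - t := min_le_right _ _
  have hδT : δ < T := by
    rw [hT]
    refine lt_of_le_of_lt hδa (by linarith)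
  have hnear : ∀ u₀ : ℝ, (∀ k : ℤ, u₀ ≠ (k:ℝ)*T) → ∀ᶠ v in nhds u₀, ∀ k : ℤ, v ≠ (k:ℝ)*T := by
    intro u₀ h0
    set k₀ : ℤ := ⌊u₀/T⌋ with hk₀
    have h1 : (k₀:ℝ)*T < u₀ := by
      have := Int.floor_le (u₀/T)
      have h2 : (k₀:ℝ)*T ≤ u₀ := by
        rw [hk₀]
        calc (⌊u₀/T⌋:ℝ)*T ≤ (u₀/T)*T := by
              exact mul_le_mul_of_nonneg_right this hT0.le
          _ = u₀ := by field_simp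
      exact lt_of_le_of_ne h2 (fun h => h0 k₀ h.symm)
    have h2 : u₀ < ((k₀:ℝ)+1)*T := by
      have := Int.lt_floor_add_one (u₀/T)
      calc u₀ = (u₀/T)*T := by field_simp
        _ < ((k₀:ℝ)+1)*T := by
            refine mul_lt_mul_of_pos_right ?_ hT0
            exact_mod_cast this
    filter_upwards [Ioo_mem_nhds h1 h2] with v hv
    rintro k rfl
    have hlt1 : (k₀:ℝ)*T < (k:ℝ)*T := hv.1
    have hlt2 : (k:ℝ)*T < ((k₀:ℝ)+1)*T := hv.2
    have i1 : (k₀:ℝ) < k := lt_of_mul_lt_mul_right (by linarith) hT0.le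
    have i2 : (k:ℝ) < (k₀:ℝ)+1 := lt_of_mul_lt_mul_right (by linarith) hT0.le
    have j1 : k₀ < k := by exact_mod_cast i1
    have j2 : k < k₀ + 1 := by exact_mod_cast i2
    omega
  have hmem_nhds : ∀ x₀ : ℝ, (∀ k : ℤ, x₀ ≠ t + (k:ℝ)*T) →
      {x : ℝ | ∀ k : ℤ, x ≠ t + (k:ℝ)*T} ∈ nhds x₀ := by
    intro x₀ h0
    have h1 : ∀ k : ℤ, x₀ - t ≠ (k:ℝ)*T := by
      intro k hk
      exact h0 k (by linarith)
    have h2 := hnear (x₀ - t) h1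
    have h3 : ContinuousAt (fun x : ℝ => x - t) x₀ := by fun_prop
    have h4 := h3.preimage_mem_nhds h2
    refine Filter.mem_of_superset h4 ?_
    intro x hx
    intro k hk
    exact (hx k) (by rw [hk]; ring)
  have hFsmooth : ContDiff ℝ (⊤ : ℕ∞) F := by
    rw [contDiff_iff_contDiffAt]
    have hat0 : ContDiffAt ℝ (⊤ : ℕ∞) F 0 := by
      have hFG : F =ᶠ[nhds 0] G := by
        filter_upwards [Ioo_mem_nhds (by linarith : -δ < (0:ℝ)) hδ0] with v hv
        by_cases hv0 : v = 0
        · rw [hv0, hF0, hG0]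
        · have hvT : ¬∃ k : ℤ, v = (k:ℝ)*T := by
            rintro ⟨k, rfl⟩
            have habs : |(k:ℝ)| * T < T := by
              have h1 : |(k:ℝ)*T| < δ := abs_lt.mpr ⟨by linarith [hv.1], hv.2⟩
              rw [abs_mul, abs_of_pos hT0] at h1
              linarith
            have hk1 : |(k:ℝ)| < 1 := by
              by_contra hcon
              push_neg at hcon
              nlinarith
            have hk2 : |k| < 1 := by exact_mod_cast (by rwa [← Int.cast_abs] at hk1 : ((|k|:ℤ):ℝ) < 1)
            have hk3 : k = 0 := by rwa [Int.abs_lt_one_iff] at hk2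
            exact hv0 (by rw [hk3]; norm_num)
          have e0 : F v = f (t+v) + f (t-v) := by
            rw [hFdef]; simp only; rw [if_neg hvT]
          have harg1 : t + v ∈ Set.Icc a b := by
            constructor
            · have := hv.1; have := hδa; linarith
            · have := hv.2; have := hδb; linarith
          have harg2 : t - v ∈ Set.Icc a b := by
            constructor
            · have := hv.2; have := hδa; linarith
            · have := hv.1; have := hδb; linarith
          have e1 : f (t+v) = g (t+v) / v := by
            rw [hfg (t+v) harg1 (by intro hcon; exact hv0 (by linarith))]
            norm_num
          have e2 : f (t-v) = g (t-v) / (-v) := by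
            rw [hfg (t-v) harg2 (by intro hcon; exact hv0 (by linarith))]
            norm_num
          rw [e0, e1, e2, hGu v hv0, div_neg]
          ring
      exact hGsm.contDiffAt.congr_of_eventuallyEq hFG
    intro u₀
    by_cases hu₀ : ∃ k : ℤ, u₀ = (k:ℝ)*T
    · obtain ⟨k₀, hk₀⟩ := hu₀
      have hperk : F = fun u => F (u - (k₀:ℝ)*T) := by
        funext u
        have h1 := (hFper.int_mul k₀) (u - (k₀:ℝ)*T)
        simp only [sub_add_cancel] at h1
        exact h1
      rw [hperk]
      have h0' : ContDiffAt ℝ (⊤ : ℕ∞) F (u₀ - (k₀:ℝ)*T) := by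
        rw [show u₀ - (k₀:ℝ)*T = (0:ℝ) from by rw [hk₀]; ring]
        exact hat0
      exact ContDiffAt.comp u₀ h0' (contDiffAt_id.sub contDiffAt_const)
    · push_neg at hu₀
      have h1 : ContDiffAt ℝ (⊤ : ℕ∞) (fun u : ℝ => f (t + u)) u₀ := by
        have hm : {x : ℝ | ∀ k : ℤ, x ≠ t + (k:ℝ)*T} ∈ nhds (t + u₀) := by
          refine hmem_nhds _ ?_
          intro k hk
          exact hu₀ k (by linarith)
        exact (hf.contDiffAt hm).comp u₀ (contDiffAt_const.add contDiffAt_id)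
      have h2 : ContDiffAt ℝ (⊤ : ℕ∞) (fun u : ℝ => f (t - u)) u₀ := by
        have hm : {x : ℝ | ∀ k : ℤ, x ≠ t + (k:ℝ)*T} ∈ nhds (t - u₀) := by
          refine hmem_nhds _ ?_
          intro k hk
          refine hu₀ (-k) ?_
          push_cast
          linarith
        exact (hf.contDiffAt hm).comp u₀ (contDiffAt_const.sub contDiffAt_id)
      have heq : F =ᶠ[nhds u₀] (fun u : ℝ => f (t + u) + f (t - u)) := by
        filter_upwards [hnear u₀ hu₀] with v hv
        rw [hFdef]
        simp only
        rw [if_neg (by rintro ⟨k, hk⟩; exact hv k hk)]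
      exact (h1.add h2).congr_of_eventuallyEq heq
  exact ⟨F, hFsmooth, hFper, hF0, hFeq⟩

lemma I_eq (a b t T : ℝ) (hab : a < b) (hT : T = b - a) (ht : t ∈ Set.Ioo a b)
    (f F : ℝ → ℝ) (hper : ∀ x, f (x + T) = f x)
    (hf : ContDiffOn ℝ (⊤ : ℕ∞) f {x : ℝ | ∀ k : ℤ, x ≠ t + k * T})
    (hFc : Continuous F)
    (hFeq : ∀ u : ℝ, 0 < u → u < T → F u = f (t+u) + f (t-u))
    (I : ℝ)
    (hI : Filter.Tendsto (fun ε : ℝ => (∫ x in Set.Icc a b \ Set.Ioo (t - ε) (t + ε), f x))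
      (nhdsWithin 0 (Set.Ioi 0)) (nhds I)) :
    I = (1/2) * ∫ x in (0:ℝ)..T, F x := by
  have hT0 : 0 < T := by rw [hT]; linarith
  have hta : a < t := ht.1
  have htb : t < b := ht.2
  set δ : ℝ := min (t - a) (b - t) with hδdef
  have hδ0 : 0 < δ := lt_min (by linarith) (by linarith)
  have hδa : δ ≤ t - a := min_le_left _ _
  have hδb : δ ≤ b - t := min_le_right _ _
  have havoidL : ∀ (c d : ℝ), t - T < c → d < t → ∀ x ∈ Set.Icc c d, ∀ k : ℤ, x ≠ t + (k:ℝ)*T := by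
    intro c d hc hd x hx k hk
    rcases le_or_gt 0 k with h | h
    · have h1 : (0:ℝ) ≤ (k:ℝ) := by exact_mod_cast h
      have : (0:ℝ) ≤ (k:ℝ)*T := mul_nonneg h1 hT0.le
      have := hx.2
      rw [hk] at this
      linarith
    · have h1 : (k:ℝ) ≤ -1 := by
        have : k ≤ -1 := by omega
        exact_mod_cast this
      have : (k:ℝ)*T ≤ -T := by nlinarith
      have := hx.1
      rw [hk] at this
      linarith
  have havoidR : ∀ (c d : ℝ), t < c → d < t + T → ∀ x ∈ Set.Icc c d, ∀ k : ℤ, x ≠ t + (k:ℝ)*T := by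
    intro c d hc hd x hx k hk
    rcases le_or_gt k 0 with h | h
    · have h1 : (k:ℝ) ≤ 0 := by exact_mod_cast h
      have : (k:ℝ)*T ≤ 0 := mul_nonpos_of_nonpos_of_nonneg h1 hT0.le
      have := hx.1
      rw [hk] at this
      linarith
    · have h1 : (1:ℝ) ≤ (k:ℝ) := by exact_mod_cast h
      have : T ≤ (k:ℝ)*T := by nlinarith
      have := hx.2
      rw [hk] at this
      linarith
  have heq : ∀ᶠ ε in nhdsWithin 0 (Set.Ioi 0),
      (∫ x in Set.Icc a b \ Set.Ioo (t - ε) (t + ε), f x) = (1/2) * ∫ u in ε..(T-ε), F u := by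
    filter_upwards [Ioo_mem_nhdsGT_of_mem (Set.mem_Ico.mpr ⟨le_refl (0:ℝ), hδ0⟩)] with ε hε
    have hε0 : 0 < ε := hε.1
    have hεδ : ε < δ := hε.2
    have hεa : ε < t - a := lt_of_lt_of_le hεδ hδa
    have hεb : ε < b - t := lt_of_lt_of_le hεδ hδb
    have hεT : ε < T - ε := by rw [hT]; linarith
    have hle : ε ≤ T - ε := hεT.le
    have hset : Set.Icc a b \ Set.Ioo (t-ε) (t+ε) = Set.Icc a (t-ε) ∪ Set.Icc (t+ε) b := by
      ext x
      simp only [Set.mem_diff, Set.mem_Icc, Set.mem_Ioo, Set.mem_union, not_and, not_lt]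
      constructor
      · rintro ⟨⟨h1, h2⟩, h3⟩
        by_cases h4 : x ≤ t - ε
        · exact Or.inl ⟨h1, h4⟩
        · push_neg at h4
          exact Or.inr ⟨h3 h4, h2⟩
      · rintro (⟨h1, h2⟩ | ⟨h1, h2⟩)
        · exact ⟨⟨h1, by linarith⟩, fun hh => by linarith⟩
        · exact ⟨⟨by linarith, h2⟩, fun hh => by linarith⟩
    have hcA : ContinuousOn f (Set.Icc a (t-ε)) :=
      hf.continuousOn.mono (fun x hx => havoidL a (t-ε) (by linarith) (by linarith) x hx)
    have hcB : ContinuousOn f (Set.Icc (t+ε) b) :=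
      hf.continuousOn.mono (fun x hx => havoidR (t+ε) b (by linarith) (by linarith) x hx)
    have hcC : ContinuousOn f (Set.Icc b (t+T-ε)) :=
      hf.continuousOn.mono (fun x hx => havoidR b (t+T-ε) (by linarith) (by linarith) x hx)
    have hcC' : ContinuousOn f (Set.Icc (t+ε) (t+T-ε)) :=
      hf.continuousOn.mono (fun x hx => havoidR (t+ε) (t+T-ε) (by linarith) (by linarith) x hx)
    have hcD : ContinuousOn f (Set.Icc (t-T+ε) (t-ε)) :=
      hf.continuousOn.mono (fun x hx => havoidL (t-T+ε) (t-ε) (by linarith) (by linarith) x hx)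
    have hdisj : Disjoint (Set.Icc a (t-ε)) (Set.Icc (t+ε) b) := by
      rw [Set.disjoint_left]
      intro x hx1 hx2
      have := hx1.2; have := hx2.1
      linarith
    rw [hset, MeasureTheory.setIntegral_union hdisj measurableSet_Icc
      hcA.integrableOn_Icc hcB.integrableOn_Icc]
    have e1 : ∫ x in Set.Icc a (t-ε), f x = ∫ x in a..(t-ε), f x := by
      rw [MeasureTheory.integral_Icc_eq_integral_Ioc, ← intervalIntegral.integral_of_le (by linarith)]
    have e2 : ∫ x in Set.Icc (t+ε) b, f x = ∫ x in (t+ε)..b, f x := by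
      rw [MeasureTheory.integral_Icc_eq_integral_Ioc, ← intervalIntegral.integral_of_le (by linarith)]
    have e3 : ∫ x in a..(t-ε), f x = ∫ x in b..(t+T-ε), f x := by
      have h1 : ∫ x in a..(t-ε), f x = ∫ x in a..(t-ε), f (x + T) :=
        intervalIntegral.integral_congr (fun x _ => (hper x).symm)
      rw [h1, intervalIntegral.integral_comp_add_right]
      congr 1
      · rw [hT]; ring
      · ring
    have iAB : IntervalIntegrable f volume (t+ε) b := by
      refine ContinuousOn.intervalIntegrable ?_
      rwa [Set.uIcc_of_le (by linarith)]
    have iBC : IntervalIntegrable f volume b (t+T-ε) := by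
      refine ContinuousOn.intervalIntegrable ?_
      rwa [Set.uIcc_of_le (by linarith)]
    have e4 : (∫ x in (t+ε)..b, f x) + (∫ x in b..(t+T-ε), f x) = ∫ x in (t+ε)..(t+T-ε), f x :=
      intervalIntegral.integral_add_adjacent_intervals iAB iBC
    have e5 : ∫ u in ε..(T-ε), f (t + u) = ∫ x in (t+ε)..(t+T-ε), f x := by
      rw [intervalIntegral.integral_comp_add_left]
      congr 1
      ring
    have h2 : ∀ u : ℝ, f (t + (T - u)) = f (t - u) := by
      intro u
      have h3 := hper (t-u)
      rw [show t - u + T = t + (T - u) from by ring] at h3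
      exact h3
    have e6 : ∫ u in ε..(T-ε), f (t - u) = ∫ u in ε..(T-ε), f (t + u) := by
      calc ∫ u in ε..(T-ε), f (t - u)
          = ∫ u in ε..(T-ε), (fun w => f (t + w)) (T - u) :=
            intervalIntegral.integral_congr fun u _ => (h2 u).symm
        _ = ∫ x in (T - (T-ε))..(T - ε), f (t + x) :=
            intervalIntegral.integral_comp_sub_left (fun w => f (t + w)) T
        _ = ∫ u in ε..(T-ε), f (t + u) := by norm_num
    have hmapC : ∀ u ∈ Set.Icc ε (T-ε), t + u ∈ Set.Icc (t+ε) (t+T-ε) := by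
      intro u hu
      exact ⟨by linarith [hu.1], by linarith [hu.2]⟩
    have hmapD : ∀ u ∈ Set.Icc ε (T-ε), t - u ∈ Set.Icc (t-T+ε) (t-ε) := by
      intro u hu
      exact ⟨by linarith [hu.2], by linarith [hu.1]⟩
    have hint1 : IntervalIntegrable (fun u => f (t+u)) volume ε (T-ε) := by
      refine ContinuousOn.intervalIntegrable ?_
      rw [Set.uIcc_of_le hle]
      exact hcC'.comp ((continuous_const.add continuous_id).continuousOn) hmapC
    have hint2 : IntervalIntegrable (fun u => f (t-u)) volume ε (T-ε) := by
      refine ContinuousOn.intervalIntegrable ?_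
      rw [Set.uIcc_of_le hle]
      exact hcD.comp ((continuous_const.sub continuous_id).continuousOn) hmapD
    have h3 : ∫ u in ε..(T-ε), F u
        = (∫ u in ε..(T-ε), f (t+u)) + ∫ u in ε..(T-ε), f (t-u) := by
      rw [← intervalIntegral.integral_add hint1 hint2]
      refine intervalIntegral.integral_congr fun u hu => ?_
      rw [Set.uIcc_of_le hle] at hu
      exact hFeq u (lt_of_lt_of_le hε0 hu.1) (by linarith [hu.2])
    rw [e1, e2, e3, add_comm, e4, ← e5]
    rw [h3, e6]
    ring
  have hlim : Filter.Tendsto (fun ε : ℝ => (1/2) * ∫ u in ε..(T-ε), F u)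
      (nhdsWithin 0 (Set.Ioi 0)) (nhds ((1/2) * ∫ x in (0:ℝ)..T, F x)) := by
    set Prim : ℝ → ℝ := fun x => ∫ u in (0:ℝ)..x, F u with hPrimdef
    have hPrimc : Continuous Prim :=
      intervalIntegral.continuous_primitive (fun c d => hFc.intervalIntegrable c d) 0
    have hsub : ∀ ε : ℝ, (1/2) * ∫ u in ε..(T-ε), F u = (1/2) * (Prim (T-ε) - Prim ε) := by
      intro ε
      congr 1
      rw [hPrimdef]
      simp only
      rw [← intervalIntegral.integral_interval_sub_left (hFc.intervalIntegrable 0 (T-ε))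
        (hFc.intervalIntegrable 0 ε)]
    have hcont : Continuous (fun ε : ℝ => (1/2) * (Prim (T-ε) - Prim ε)) := by
      refine continuous_const.mul ((hPrimc.comp (continuous_const.sub continuous_id)).sub hPrimc)
    have h4 := (hcont.tendsto 0).mono_left (nhdsWithin_le_nhds (s := Set.Ioi (0:ℝ)))
    simp only [sub_zero] at h4
    have h5 : Prim T - Prim 0 = ∫ x in (0:ℝ)..T, F x := by
      rw [hPrimdef]
      simp [intervalIntegral.integral_same]
    rw [h5] at h4
    refine Filter.Tendsto.congr (fun ε => (hsub ε).symm) h4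
  refine tendsto_nhds_unique hI (hlim.congr' ?_)
  filter_upwards [heq] with ε hε
  exact hε.symm

theorem stmt_4 (a b t T : ℝ) (hab : a < b) (hT : T = b - a) (ht : t ∈ Set.Ioo a b)
    (f g : ℝ → ℝ)
    (hper : ∀ x, f (x + T) = f x)
    (hf : ContDiffOn ℝ (⊤ : ℕ∞) f {x : ℝ | ∀ k : ℤ, x ≠ t + k * T})
    (hg : ContDiff ℝ (⊤ : ℕ∞) g)
    (hfg : ∀ x ∈ Set.Icc a b, x ≠ t → f x = g x / (x - t) ^ 1)
    (I : ℝ)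
    (hI : Tendsto (fun ε : ℝ =>
        (∫ x in Set.Icc a b \ Set.Ioo (t - ε) (t + ε), f x))
      (nhdsWithin 0 (Set.Ioi 0)) (nhds I)) :
    ∀ μ : ℝ, 0 < μ →
      Tendsto (fun n : ℕ =>
        (n : ℝ) ^ μ *
          ((T / n) * (∑ j ∈ Finset.Icc 1 (n - 1), f (t + (j : ℝ) * (T / n)))
            + deriv g t * (T / n)
            - I))
        atTop (nhds 0) := by
  have hT0 : 0 < T := by rw [hT]; linarith
  have hta : a < t := ht.1
  have htb : t < b := ht.2
  obtain ⟨F, hFsm, hFper, hF0, hFeq⟩ := F_exists a b t T hab hT ht f g hper hf hg hfg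
  have hIval : I = (1/2) * ∫ x in (0:ℝ)..T, F x :=
    I_eq a b t T hab hT ht f F hper hf hFsm.continuous hFeq I hI
  -- key identity for each n ≥ 1
  have hkey : ∀ n : ℕ, 1 ≤ n →
      (T / n) * (∑ j ∈ Finset.Icc 1 (n - 1), f (t + (j : ℝ) * (T / n)))
        + deriv g t * (T / n) - I
      = (1/2) * ((T/n) * (∑ j ∈ Finset.range n, F ((j:ℝ)*(T/n))) - ∫ x in (0:ℝ)..T, F x) := by
    intro n hn
    have hn0 : (0:ℝ) < n := by exact_mod_cast hn
    set h : ℝ := T / n with hdef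
    have hh : 0 < h := div_pos hT0 hn0
    have hnh : (n:ℝ) * h = T := by rw [hdef]; field_simp
    have hIcc : Finset.Icc 1 (n-1) = Finset.Ico 1 n := by
      ext j
      simp only [Finset.mem_Icc, Finset.mem_Ico]
      omega
    have hins : Finset.range n = insert 0 (Finset.Ico 1 n) := by
      ext j
      simp only [Finset.mem_range, Finset.mem_insert, Finset.mem_Ico]
      omega
    have hjh : ∀ j ∈ Finset.Ico 1 n, 0 < (j:ℝ)*h ∧ (j:ℝ)*h < T := by
      intro j hj
      rw [Finset.mem_Ico] at hj
      have h1 : (1:ℝ) ≤ (j:ℝ) := by exact_mod_cast hj.1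
      have h2 : (j:ℝ) < (n:ℝ) := by exact_mod_cast hj.2
      constructor
      · positivity
      · calc (j:ℝ)*h < (n:ℝ)*h := by
              exact mul_lt_mul_of_pos_right h2 hh
          _ = T := hnh
    have hsum1 : ∑ j ∈ Finset.range n, F ((j:ℝ)*h)
        = F 0 + ∑ j ∈ Finset.Ico 1 n, F ((j:ℝ)*h) := by
      rw [hins, Finset.sum_insert (by simp)]
      norm_num
    have hsum2 : ∑ j ∈ Finset.Ico 1 n, F ((j:ℝ)*h)
        = (∑ j ∈ Finset.Ico 1 n, f (t + (j:ℝ)*h)) + ∑ j ∈ Finset.Ico 1 n, f (t - (j:ℝ)*h) := by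
      rw [← Finset.sum_add_distrib]
      refine Finset.sum_congr rfl fun j hj => ?_
      exact hFeq ((j:ℝ)*h) (hjh j hj).1 (hjh j hj).2
    have hsum3 : ∑ j ∈ Finset.Ico 1 n, f (t - (j:ℝ)*h)
        = ∑ j ∈ Finset.Ico 1 n, f (t + (j:ℝ)*h) := by
      have hterm : ∀ j ∈ Finset.Ico 1 n, f (t - (j:ℝ)*h) = f (t + ((n-j:ℕ):ℝ)*h) := by
        intro j hj
        rw [Finset.mem_Ico] at hj
        have hcast : ((n-j:ℕ):ℝ) = (n:ℝ) - (j:ℝ) := by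
          rw [Nat.cast_sub (by omega)]
        have h1 := hper (t - (j:ℝ)*h)
        rw [show t - (j:ℝ)*h + T = t + ((n:ℝ) - (j:ℝ))*h from by rw [← hnh]; ring] at h1
        rw [← h1, hcast]
      rw [Finset.sum_congr rfl hterm]
      refine Finset.sum_nbij' (fun j => n - j) (fun j => n - j) ?_ ?_ ?_ ?_ ?_
      · intro j hj
        rw [Finset.mem_Ico] at hj ⊢
        omega
      · intro j hj
        rw [Finset.mem_Ico] at hj ⊢
        omega
      · intro j hj
        rw [Finset.mem_Ico] at hj
        omega
      · intro j hj
        rw [Finset.mem_Ico] at hj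
        omega
      · intro j hj
        rfl
    have hsum : ∑ j ∈ Finset.range n, F ((j:ℝ)*h)
        = 2 * (∑ j ∈ Finset.Ico 1 n, f (t + (j:ℝ)*h)) + F 0 := by
      rw [hsum1, hsum2, hsum3]
      ring
    rw [hIcc, hIval, hsum, hF0]
    ring
  intro μ hμ
  set m : ℕ := ⌈μ⌉₊ + 1 with hm
  have hm1 : 1 ≤ m := by omega
  have hμm : μ < (m:ℝ) := by
    calc μ ≤ (⌈μ⌉₊:ℝ) := Nat.le_ceil μ
      _ < (m:ℝ) := by rw [hm]; push_cast; linarith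
  obtain ⟨C, hC0, hC⟩ := quad_error hT0 hFsm hFper m hm1
  refine squeeze_zero_norm' (a := fun n : ℕ => (C/2) * (n:ℝ)^(μ - (m:ℝ))) ?_ ?_
  · filter_upwards [eventually_ge_atTop 1] with n hn
    have hn0 : (0:ℝ) < n := by exact_mod_cast hn
    rw [hkey n hn]
    rw [Real.norm_eq_abs, abs_mul, abs_mul]
    have h1 : |(n:ℝ)^μ| = (n:ℝ)^μ := abs_of_nonneg (Real.rpow_nonneg hn0.le μ)
    have h2 : |(1:ℝ)/2| = 1/2 := by norm_num
    rw [h1, h2]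
    have h3 := hC n hn
    have h4 : (n:ℝ)^μ * ((1/2) * |(T/n) * (∑ j ∈ Finset.range n, F ((j:ℝ)*(T/n))) - ∫ x in (0:ℝ)..T, F x|)
        ≤ (n:ℝ)^μ * ((1/2) * (C / (n:ℝ)^m)) := by
      refine mul_le_mul_of_nonneg_left ?_ (Real.rpow_nonneg hn0.le μ)
      refine mul_le_mul_of_nonneg_left h3 (by norm_num)
    refine h4.trans (le_of_eq ?_)
    rw [Real.rpow_sub hn0 μ (m:ℝ), Real.rpow_natCast]
    field_simp
  · have hpos : 0 < (m:ℝ) - μ := by linarith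
    have h5 : Tendsto (fun x : ℝ => x ^ (-((m:ℝ) - μ))) atTop (nhds 0) :=
      tendsto_rpow_neg_atTop hpos
    have h6 : Tendsto (fun n : ℕ => ((n:ℝ)) ^ (μ - (m:ℝ))) atTop (nhds 0) := by
      have h7 := h5.comp (tendsto_natCast_atTop_atTop (R := ℝ))
      have h8 : (fun n : ℕ => ((n:ℝ)) ^ (μ - (m:ℝ)))
          = (fun x : ℝ => x ^ (-((m:ℝ) - μ))) ∘ (Nat.cast : ℕ → ℝ) := by
        funext n
        simp only [Function.comp_apply]
        congr 1
        ring
      rw [h8]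
      exact h7
    have h9 := h6.const_mul (C/2)
    simpa using h9
end

section
/- (Richardson identity, s = 2, m = 3.) For every function f : ℝ → ℝ, all reals t, A, B, every T > 0, and every positive integer n, one has −2·T̂^{(0)}_{3,n} + 5·T̂^{(0)}_{3,2n} − 2·T̂^{(0)}_{3,4n} = 2h ∑_{j=1}^{n} f(t + jh − h/2) − (h/2) ∑_{j=1}^{2n} f(t + jh/2 − h/4), where h = T/n; that is, two steps of Richardson-like extrapolation (eliminating the powers h¹ and h^{−1}) produce exactly the derivative-free formula T̂^{(2)}_{3,n}, in which the coefficients A and B cancel completely. -/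
open Real Finset

/-- The quadrature formula `T̂⁰₃ₙ[f] = h ∑_{j=1}^{n-1} f(t+jh) - (π²/3) A h⁻¹ + (1/6) B h`,
with `h = T/n`. In the paper, `A = g′(t)` and `B = g‴(t)`. -/
noncomputable def That0 (f : ℝ → ℝ) (t A B T : ℝ) (n : ℕ) : ℝ :=
  (T / n) * ∑ j ∈ Finset.Icc 1 (n - 1), f (t + (j : ℝ) * (T / n))
    - (π ^ 2 / 3) * A * (T / n)⁻¹ + (1 / 6) * B * (T / n)

lemma split_sum (g : ℕ → ℝ) (n : ℕ) :
    ∑ j ∈ Finset.Icc 1 (2 * n), g j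
      = ∑ k ∈ Finset.Icc 1 n, g (2 * k) + ∑ k ∈ Finset.Icc 1 n, g (2 * k - 1) := by
  induction n with
  | zero => simp
  | succ m ih =>
    have e1 : 2 * (m + 1) = (2 * m + 1) + 1 := by ring
    rw [e1, Finset.sum_Icc_succ_top (by omega), Finset.sum_Icc_succ_top (by omega), ih,
      Finset.sum_Icc_succ_top (by omega : 1 ≤ m + 1),
      Finset.sum_Icc_succ_top (by omega : 1 ≤ m + 1)]
    have e2 : 2 * (m + 1) - 1 = 2 * m + 1 := by omega
    have e3 : 2 * (m + 1) = 2 * m + 1 + 1 := by omega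
    rw [e2, e3]
    ring

lemma drop_top (g : ℕ → ℝ) (m : ℕ) (hm : 0 < m) :
    ∑ j ∈ Finset.Icc 1 m, g j = ∑ j ∈ Finset.Icc 1 (m - 1), g j + g m := by
  have e : m = (m - 1) + 1 := by omega
  rw [e, Finset.sum_Icc_succ_top (by omega)]
  simp

theorem stmt_15 (f : ℝ → ℝ) (t A B T : ℝ) (hT : 0 < T) (n : ℕ) (hn : 0 < n) :
    -2 * That0 f t A B T n + 5 * That0 f t A B T (2 * n) - 2 * That0 f t A B T (4 * n)
      = 2 * (T / n) * ∑ j ∈ Finset.Icc 1 n, f (t + (j : ℝ) * (T / n) - (T / n) / 2)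
          - ((T / n) / 2) *
            ∑ j ∈ Finset.Icc 1 (2 * n), f (t + (j : ℝ) * (T / n) / 2 - (T / n) / 4) := by
  have hn' : (0:ℝ) < (n:ℝ) := by exact_mod_cast hn
  have hn0 : (n:ℝ) ≠ 0 := ne_of_gt hn'
  set h : ℝ := T / n with hh
  have h2 : T / ((2 * n : ℕ) : ℝ) = h / 2 := by rw [hh]; push_cast; rw [div_div]; ring_nf
  have h4 : T / ((4 * n : ℕ) : ℝ) = h / 4 := by rw [hh]; push_cast; rw [div_div]; ring_nf
  -- full sums
  have key : ∀ (c : ℝ) (m : ℕ), 0 < m → (m : ℝ) * c = T →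
      ∑ j ∈ Finset.Icc 1 (m - 1), f (t + (j : ℝ) * c)
        = ∑ j ∈ Finset.Icc 1 m, f (t + (j : ℝ) * c) - f (t + T) := by
    intro c m hm hmc
    rw [drop_top (fun j => f (t + (j : ℝ) * c)) m hm, hmc]
    ring
  have hc1 : (n : ℝ) * h = T := by rw [hh]; field_simp [hn0]
  have hc2 : ((2 * n : ℕ) : ℝ) * (h / 2) = T := by push_cast; rw [hh]; field_simp [hn0]
  have hc4 : ((4 * n : ℕ) : ℝ) * (h / 4) = T := by push_cast; rw [hh]; field_simp [hn0]
  have e1 := key h n hn hc1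
  have e2 := key (h / 2) (2 * n) (by omega) hc2
  have e4 := key (h / 4) (4 * n) (by omega) hc4
  -- split the fine sums into even and odd parts
  have s2 : ∑ j ∈ Finset.Icc 1 (2 * n), f (t + (j : ℝ) * (h / 2))
      = ∑ k ∈ Finset.Icc 1 n, f (t + (k : ℝ) * h)
        + ∑ k ∈ Finset.Icc 1 n, f (t + (k : ℝ) * h - h / 2) := by
    rw [split_sum (fun j => f (t + (j : ℝ) * (h / 2))) n]
    congr 1
    · refine Finset.sum_congr rfl fun k hk => ?_
      show f (t + ((2 * k : ℕ) : ℝ) * (h / 2)) = f (t + (k : ℝ) * h)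
      congr 1; push_cast; ring
    · refine Finset.sum_congr rfl fun k hk => ?_
      have hk1 : 1 ≤ k := (Finset.mem_Icc.mp hk).1
      show f (t + ((2 * k - 1 : ℕ) : ℝ) * (h / 2)) = f (t + (k : ℝ) * h - h / 2)
      have hc : ((2 * k - 1 : ℕ) : ℝ) = 2 * (k : ℝ) - 1 := by
        have h1 : (1:ℕ) ≤ 2 * k := by omega
        push_cast [Nat.cast_sub h1]; ring
      rw [hc]; congr 1; ring
  have s4 : ∑ j ∈ Finset.Icc 1 (4 * n), f (t + (j : ℝ) * (h / 4))
      = ∑ k ∈ Finset.Icc 1 (2 * n), f (t + (k : ℝ) * (h / 2))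
        + ∑ k ∈ Finset.Icc 1 (2 * n), f (t + (k : ℝ) * (h / 2) - h / 4) := by
    have e : 4 * n = 2 * (2 * n) := by ring
    rw [e, split_sum (fun j => f (t + (j : ℝ) * (h / 4))) (2 * n)]
    congr 1
    · refine Finset.sum_congr rfl fun k hk => ?_
      show f (t + ((2 * k : ℕ) : ℝ) * (h / 4)) = f (t + (k : ℝ) * (h / 2))
      congr 1; push_cast; ring
    · refine Finset.sum_congr rfl fun k hk => ?_
      have hk1 : 1 ≤ k := (Finset.mem_Icc.mp hk).1
      show f (t + ((2 * k - 1 : ℕ) : ℝ) * (h / 4)) = f (t + (k : ℝ) * (h / 2) - h / 4)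
      have hc : ((2 * k - 1 : ℕ) : ℝ) = 2 * (k : ℝ) - 1 := by
        have h1 : (1:ℕ) ≤ 2 * k := by omega
        push_cast [Nat.cast_sub h1]; ring
      rw [hc]; congr 1; ring
  simp only [That0, ← hh, h2, h4, e1, e2, e4, s2, s4]
  have hh0 : h ≠ 0 := by positivity
  field_simp
  ring
end

section
/- For every integer m and every t ∈ (−π, π), lim_{ε→0+} ( ∫_{[−π,π]∖(t−ε,t+ε)} (cos((x−t)/2) / sin³((x−t)/2)) e^{imx} dx − 16 i m e^{imt} / ε ) = −sgn(m) · 4π i m² e^{imt}, where sgn(m) is 1, 0, −1 according as m > 0, m = 0, m < 0. (This is the Hadamard finite part ⨎_{−π}^{π} (cos((x−t)/2)/sin³((x−t)/2)) e^{imx} dx = −sgn(m) i 4π m² e^{imt}, with the finite part defined via the subtraction 2g′(t)/ε, where g(x) = (x−t)³ cos((x−t)/2)/sin³((x−t)/2) · e^{imx} has g′(t) = 8 i m e^{imt}.) -/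
open Real Filter MeasureTheory Complex Finset

lemma exp_Iu (u : ℝ) : Complex.exp (Complex.I*u)
    = (1 - 2*(Real.sin (u/2):ℂ)^2) + (2*(Real.sin (u/2):ℂ)*(Real.cos (u/2):ℂ))*Complex.I := by
  have hs : Real.sin u = 2 * Real.sin (u/2) * Real.cos (u/2) := by
    have := Real.sin_two_mul (u/2); rw [show 2*(u/2) = u by ring] at this; linarith
  have hc : Real.cos u = 1 - 2 * Real.sin (u/2)^2 := by
    have h1 := Real.cos_two_mul (u/2)
    rw [show 2*(u/2) = u by ring] at h1
    nlinarith [Real.sin_sq_add_cos_sq (u/2)]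
  rw [show Complex.I*(u:ℂ) = (u:ℂ)*Complex.I by ring, Complex.exp_mul_I,
    ← Complex.ofReal_cos, ← Complex.ofReal_sin, hs, hc]
  push_cast; ring

lemma pyC (x : ℝ) : (Real.sin x:ℂ)^2 + (Real.cos x:ℂ)^2 = 1 := by
  norm_cast; exact Real.sin_sq_add_cos_sq _

lemma hbase (u : ℝ) : (Complex.exp (Complex.I*u) - 1) * (Real.cos (u/2) : ℂ)
    = Complex.I * (Complex.exp (Complex.I*u) + 1) * (Real.sin (u/2) : ℂ) := by
  rw [exp_Iu u]
  linear_combination (-2*(Real.sin (u/2):ℂ)^2*(Real.cos (u/2):ℂ)) * Complex.I_sq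
    + 2*(Real.sin (u/2):ℂ)*Complex.I * pyC (u/2)

lemma hkey (m : ℕ) (hm : 1 ≤ m) (u : ℝ) :
    (Complex.exp (Complex.I*u)^m - 1) * (Real.cos (u/2) : ℂ)
    = Complex.I * (Real.sin (u/2) : ℂ) *
      (Complex.exp (Complex.I*u)^m + 1 + 2 * ∑ k ∈ Finset.Ico 1 m, Complex.exp (Complex.I*u)^k) := by
  set w := Complex.exp (Complex.I*u) with hw
  have hgeo : (w^m - 1) = (∑ i ∈ Finset.range m, w^i) * (w - 1) := (geom_sum_mul w m).symm
  have h1 : ∑ i ∈ Finset.range m, w^i = 1 + ∑ k ∈ Finset.Ico 1 m, w^k := by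
    rw [Finset.range_eq_Ico, Finset.sum_eq_sum_Ico_succ_bot hm]; simp
  have h2 : ∑ i ∈ Finset.range m, w^(i+1) = (∑ k ∈ Finset.Ico 1 m, w^k) + w^m := by
    rw [← Finset.sum_Ico_succ_top hm, Finset.sum_Ico_eq_sum_range]
    simp [add_comm]
  have hsum : (∑ i ∈ Finset.range m, w^i) * (w+1)
      = w^m + 1 + 2*∑ k ∈ Finset.Ico 1 m, w^k := by
    rw [mul_add, mul_one, Finset.sum_mul]
    simp only [← pow_succ]
    rw [h1, h2]; ring
  calc (w^m - 1) * (Real.cos (u/2) : ℂ)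
      = (∑ i ∈ Finset.range m, w^i) * ((w-1) * (Real.cos (u/2):ℂ)) := by rw [hgeo]; ring
    _ = (∑ i ∈ Finset.range m, w^i) * (Complex.I*(w+1)*(Real.sin (u/2):ℂ)) := by
        rw [hw, hbase u]
    _ = Complex.I*(Real.sin (u/2):ℂ)*((∑ i ∈ Finset.range m, w^i)*(w+1)) := by ring
    _ = _ := by rw [hsum]

noncomputable def Hf (m : ℕ) (u : ℝ) : ℂ :=
  -Complex.exp (Complex.I*m*u) / (Real.sin (u/2) : ℂ)^2
  - (2*Complex.I*m) * (Complex.exp (Complex.I*m*u) * ((Real.cos (u/2) : ℂ) / (Real.sin (u/2) : ℂ)))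
  - (4*(m:ℂ)^2) * (Real.log (Real.sin (u/2)) : ℂ)
  - (2*(m:ℂ)) * Complex.exp (Complex.I*m*u)
  - (2*(m:ℂ)^2*Complex.I) * u
  - (4*(m:ℂ)^2) * ∑ k ∈ Finset.Ico 1 m, Complex.exp (Complex.I*u)^k / (k:ℂ)

-- derivative building blocks
lemma hdE (c : ℂ) (u : ℝ) : HasDerivAt (fun u:ℝ => Complex.exp (c*u)) (Complex.exp (c*u) * c) u := by
  have h0 : HasDerivAt (fun u:ℝ => (u:ℂ)) 1 u := by
    exact Complex.ofRealCLM.hasDerivAt (x := u)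
  simpa using (h0.const_mul c).cexp

lemma hdS (u : ℝ) : HasDerivAt (fun u:ℝ => Real.sin (u/2)) (Real.cos (u/2) * (1/2)) u := by
  have := (Real.hasDerivAt_sin (u/2)).comp u ((hasDerivAt_id u).div_const 2)
  exact this

lemma hdC (u : ℝ) : HasDerivAt (fun u:ℝ => Real.cos (u/2)) (-Real.sin (u/2) * (1/2)) u := by
  have := (Real.hasDerivAt_cos (u/2)).comp u ((hasDerivAt_id u).div_const 2)
  exact this



lemma alg1 (E S C M : ℂ) (hS : S ≠ 0) :
    C/S^3*E - Complex.I*M*E/S^2 = (-(E*(Complex.I*M))*S^2 - -E*(S*C))/(S^2)^2 := by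
  have hST : S * S⁻¹ = 1 := mul_inv_cancel₀ hS
  linear_combination (-E*C*(S⁻¹)^3 + Complex.I*M*E*(S⁻¹)^2*(S*S⁻¹+1)) * hST

lemma alg2 (E S C M : ℂ) (hS : S ≠ 0) (hpy : S^2 + C^2 = 1) :
    -2*M^2*E*(C/S) - Complex.I*M*E/S^2
      = 2*Complex.I*M*(E*(Complex.I*M)*(C/S) + E*((-S*(1/2)*S - C*(C*(1/2)))/S^2)) := by
  linear_combination (-2*M^2*E*C*S⁻¹)*Complex.I_sq + (Complex.I*M*E*(S⁻¹)^2)*hpy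

lemma alg3 (S C M : ℂ) :
    2*M^2*(C/S) = 4*M^2*(S⁻¹*(C*(1/2))) := by
  rw [div_eq_mul_inv]; ring

lemma alg6 (W J : ℂ) (hJ : J ≠ 0) : Complex.I * W = W*(Complex.I*J)/J := by
  have hJT : J * J⁻¹ = 1 := mul_inv_cancel₀ hJ
  linear_combination (-Complex.I*W)*hJT

lemma algMain (E S C M Z : ℂ) (hS : S ≠ 0)
    (hk : (E - 1)*C = Complex.I*S*(E + 1 + 2*Z)) :
    C/S^3*E = (C/S^3*E - Complex.I*M*E/S^2)
      - (-2*M^2*E*(C/S) - Complex.I*M*E/S^2)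
      - (2*M^2*(C/S))
      - (2*M^2*Complex.I*E)
      - (2*M^2*Complex.I)
      - (4*M^2*Complex.I*Z) := by
  have hST : S * S⁻¹ = 1 := mul_inv_cancel₀ hS
  linear_combination (-2*M^2*S⁻¹)*hk + (-2*M^2*Complex.I*(E+1+2*Z))*hST

lemma algMain0 (E S C : ℂ) :
    C/S^3*E = (C/S^3*E - Complex.I*0*E/S^2)
      - (-2*(0:ℂ)^2*E*(C/S) - Complex.I*0*E/S^2)
      - (2*(0:ℂ)^2*(C/S))
      - (2*(0:ℂ)^2*Complex.I*E)
      - (2*(0:ℂ)^2*Complex.I)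
      - (4*(0:ℂ)^2*Complex.I*0) := by
  ring

lemma hasDerivAt_Hf (m : ℕ) {u : ℝ} (hs : Real.sin (u/2) ≠ 0) :
    HasDerivAt (Hf m)
      ((Real.cos (u/2):ℂ) / (Real.sin (u/2):ℂ)^3 * Complex.exp (Complex.I*m*u)) u := by
  have hsC : (Real.sin (u/2) : ℂ) ≠ 0 := by exact_mod_cast hs
  have h0 : HasDerivAt (fun u:ℝ => (u:ℂ)) 1 u := by
    exact Complex.ofRealCLM.hasDerivAt (x := u)
  have hScd : HasDerivAt (fun u:ℝ => (Real.sin (u/2):ℂ)) ((Real.cos (u/2):ℂ) * (1/2)) u := by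
    simpa [Complex.ofReal_mul] using (hdS u).ofReal_comp
  have hCcd : HasDerivAt (fun u:ℝ => (Real.cos (u/2):ℂ)) (-(Real.sin (u/2):ℂ) * (1/2)) u := by
    simpa [Complex.ofReal_mul, Complex.ofReal_neg] using (hdC u).ofReal_comp
  have hE : HasDerivAt (fun u:ℝ => Complex.exp (Complex.I*m*u))
      (Complex.exp (Complex.I*m*u) * (Complex.I*m)) u := hdE _ u
  have hd2 : HasDerivAt (fun u:ℝ => (Real.sin (u/2):ℂ)^2)
      ((Real.sin (u/2):ℂ)*(Real.cos (u/2):ℂ)) u := by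
    have h := hScd.mul hScd
    have hfe : (fun u:ℝ => (Real.sin (u/2):ℂ)^2)
        = fun u:ℝ => (Real.sin (u/2):ℂ) * (Real.sin (u/2):ℂ) := by
      funext v; exact sq _
    rw [hfe]
    refine h.congr_deriv ?_
    symm
    ring
  have h1 : HasDerivAt (fun u:ℝ => -Complex.exp (Complex.I*m*u) / (Real.sin (u/2):ℂ)^2)
      ((Real.cos (u/2):ℂ)/(Real.sin (u/2):ℂ)^3*Complex.exp (Complex.I*m*u)
        - Complex.I*m*Complex.exp (Complex.I*m*u)/(Real.sin (u/2):ℂ)^2) u := by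
    have := (hE.neg).div hd2 (by exact pow_ne_zero 2 hsC)
    refine this.congr_deriv ?_
    symm
    exact alg1 _ _ _ _ hsC
  have h2 : HasDerivAt (fun u:ℝ => (2*Complex.I*(m:ℂ)) *
        (Complex.exp (Complex.I*m*u) * ((Real.cos (u/2):ℂ) / (Real.sin (u/2):ℂ))))
      (-2*(m:ℂ)^2*Complex.exp (Complex.I*m*u)*((Real.cos (u/2):ℂ)/(Real.sin (u/2):ℂ))
        - Complex.I*m*Complex.exp (Complex.I*m*u)/(Real.sin (u/2):ℂ)^2) u := by
    have := (hE.mul (hCcd.div hScd hsC)).const_mul (2*Complex.I*(m:ℂ))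
    refine this.congr_deriv ?_
    symm
    exact alg2 _ _ _ _ hsC (pyC (u/2))
  have h3 : HasDerivAt (fun u:ℝ => (4*(m:ℂ)^2) * (Real.log (Real.sin (u/2)) : ℂ))
      (2*(m:ℂ)^2*((Real.cos (u/2):ℂ)/(Real.sin (u/2):ℂ))) u := by
    have hlog : HasDerivAt (fun u:ℝ => Real.log (Real.sin (u/2)))
        ((Real.sin (u/2))⁻¹ * (Real.cos (u/2) * (1/2))) u := by
      have := (Real.hasDerivAt_log hs).comp u (hdS u)
      exact this
    have := (hlog.ofReal_comp).const_mul (4*(m:ℂ)^2)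
    refine this.congr_deriv ?_
    symm
    rw [Complex.ofReal_mul, Complex.ofReal_inv, Complex.ofReal_mul]
    norm_cast
    rw [div_eq_mul_inv]
    push_cast
    ring
  have h4 : HasDerivAt (fun u:ℝ => (2*(m:ℂ)) * Complex.exp (Complex.I*m*u))
      (2*(m:ℂ)^2*Complex.I*Complex.exp (Complex.I*m*u)) u := by
    have := hE.const_mul (2*(m:ℂ))
    refine this.congr_deriv ?_
    symm
    ring
  have h5 : HasDerivAt (fun u:ℝ => (2*(m:ℂ)^2*Complex.I) * (u:ℂ)) (2*(m:ℂ)^2*Complex.I) u := by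
    simpa using h0.const_mul (2*(m:ℂ)^2*Complex.I)
  have h6 : HasDerivAt (fun u:ℝ => (4*(m:ℂ)^2) * ∑ k ∈ Finset.Ico 1 m, Complex.exp (Complex.I*u)^k / (k:ℂ))
      (4*(m:ℂ)^2*Complex.I * ∑ k ∈ Finset.Ico 1 m, Complex.exp (Complex.I*u)^k) u := by
    have hk : ∀ k ∈ Finset.Ico 1 m, HasDerivAt (fun u:ℝ => Complex.exp (Complex.I*u)^k / (k:ℂ))
        (Complex.I * Complex.exp (Complex.I*u)^k) u := by
      intro k hk
      have hk1 : 1 ≤ k := (Finset.mem_Ico.mp hk).1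
      have hkC : (k:ℂ) ≠ 0 := Nat.cast_ne_zero.mpr (by omega)
      have he : ∀ v:ℝ, Complex.exp (Complex.I*(k:ℂ)*v) = Complex.exp (Complex.I*v)^k := by
        intro v
        rw [show (Complex.I*(k:ℂ)*(v:ℂ)) = (k:ℂ)*(Complex.I*v) by ring, Complex.exp_nat_mul]
      have := (hdE (Complex.I*(k:ℂ)) u).div_const (k:ℂ)
      simp only [he] at this
      refine this.congr_deriv ?_
      symm
      exact alg6 _ _ hkC
    have := (HasDerivAt.fun_sum hk).const_mul (4*(m:ℂ)^2)
    refine this.congr_deriv ?_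
    symm
    rw [← Finset.mul_sum]
    ring
  have htot := ((((h1.sub h2).sub h3).sub h4).sub h5).sub h6
  have hHf : Hf m = fun u:ℝ => (-Complex.exp (Complex.I*m*u) / (Real.sin (u/2):ℂ)^2
      - (2*Complex.I*(m:ℂ)) * (Complex.exp (Complex.I*m*u) * ((Real.cos (u/2):ℂ) / (Real.sin (u/2):ℂ)))
      - (4*(m:ℂ)^2) * (Real.log (Real.sin (u/2)) : ℂ)
      - (2*(m:ℂ)) * Complex.exp (Complex.I*m*u)
      - (2*(m:ℂ)^2*Complex.I) * (u:ℂ)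
      - (4*(m:ℂ)^2) * ∑ k ∈ Finset.Ico 1 m, Complex.exp (Complex.I*u)^k / (k:ℂ)) := rfl
  rw [hHf]
  refine htot.congr_deriv ?_
  symm
  rcases Nat.eq_zero_or_pos m with hm | hm
  · subst hm
    push_cast
    simpa using algMain0 (Complex.exp (Complex.I*0*u)) (Real.sin (u/2):ℂ) (Real.cos (u/2):ℂ)
  · have hEw : Complex.exp (Complex.I*(m:ℂ)*u) = Complex.exp (Complex.I*u)^m := by
      rw [show (Complex.I*(m:ℂ)*(u:ℂ)) = (m:ℂ)*(Complex.I*u) by ring, Complex.exp_nat_mul]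
    have hkey' := hkey m hm u
    rw [← hEw] at hkey'
    rw [hEw]
    exact algMain _ _ _ _ _ hsC (by rw [← hEw] at *; exact hkey')

lemma Hf_eval (m : ℕ) {t : ℝ} (ht1 : -π < t) (ht2 : t < π) :
    Hf m (π - t) - Hf m (-π - t) = -4*π*Complex.I*(m:ℂ)^2 := by
  have hs1 : Real.sin ((π - t)/2) = Real.cos (t/2) := by
    rw [show (π - t)/2 = π/2 - t/2 by ring, Real.sin_pi_div_two_sub]
  have hc1 : Real.cos ((π - t)/2) = Real.sin (t/2) := by
    rw [show (π - t)/2 = π/2 - t/2 by ring, Real.cos_pi_div_two_sub]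
  have hs2 : Real.sin ((-π - t)/2) = -Real.cos (t/2) := by
    rw [show (-π - t)/2 = -(π/2 + t/2) by ring, Real.sin_neg, Real.sin_add]
    simp
  have hc2 : Real.cos ((-π - t)/2) = -Real.sin (t/2) := by
    rw [show (-π - t)/2 = -(π/2 + t/2) by ring, Real.cos_neg, Real.cos_add]
    simp
  have hexp : Complex.exp (Complex.I*(m:ℂ)*((π - t : ℝ):ℂ))
      = Complex.exp (Complex.I*(m:ℂ)*((-π - t : ℝ):ℂ)) := by
    rw [show (Complex.I*(m:ℂ)*((π - t : ℝ):ℂ))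
        = Complex.I*(m:ℂ)*((-π - t : ℝ):ℂ) + (m:ℤ)*(2*(π:ℂ)*Complex.I) by push_cast; ring,
      Complex.exp_add, Complex.exp_int_mul_two_pi_mul_I, mul_one]
  have hw : Complex.exp (Complex.I*((π - t : ℝ):ℂ))
      = Complex.exp (Complex.I*((-π - t : ℝ):ℂ)) := by
    rw [show (Complex.I*((π - t : ℝ):ℂ))
        = Complex.I*((-π - t : ℝ):ℂ) + (1:ℤ)*(2*(π:ℂ)*Complex.I) by push_cast; ring,
      Complex.exp_add, Complex.exp_int_mul_two_pi_mul_I, mul_one]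
  have hlog : Real.log (Real.sin ((-π - t)/2)) = Real.log (Real.sin ((π - t)/2)) := by
    rw [hs1, hs2, Real.log_neg_eq_log]
  unfold Hf
  rw [hexp, hw, hlog, hs1, hs2, hc1, hc2]
  push_cast
  ring

lemma sin_lin {x : ℝ} (hx : |x| ≤ 1) : |Real.sin x - x| ≤ |x|^3 := by
  have h := Real.sin_bound hx
  have h2 : |Real.sin x - x| ≤ |Real.sin x - (x - x^3/6)| + |(x - x^3/6) - x| := abs_sub_le _ _ _
  have h3 : |(x - x^3/6) - x| = |x|^3/6 := by
    rw [show (x - x^3/6) - x = -(x^3)/6 by ring, abs_div, abs_neg, _root_.abs_pow]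
    norm_num
  have h4 : |x|^5 ≤ |x|^3 := pow_le_pow_of_le_one (abs_nonneg x) hx (by norm_num)
  have h5 : (0:ℝ) ≤ |x|^3 := pow_nonneg (abs_nonneg x) 3
  linarith

lemma cos_lin {x : ℝ} (hx : |x| ≤ 1) : |Real.cos x - 1| ≤ x^2 := by
  have h := Real.cos_bound hx
  have h2 : |Real.cos x - 1| ≤ |Real.cos x - (1 - x^2/2)| + |(1 - x^2/2) - 1| := abs_sub_le _ _ _
  have h3 : |(1 - x^2/2) - 1| = x^2/2 := by
    rw [show (1 - x^2/2) - 1 = -(x^2)/2 by ring, abs_div, abs_neg]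
    rw [_root_.abs_of_nonneg (sq_nonneg x)]
    norm_num
  have h4 : |x|^4 ≤ |x|^2 := pow_le_pow_of_le_one (abs_nonneg x) hx (by norm_num)
  have h5 : |x|^2 = x^2 := sq_abs x
  have h6 := sq_nonneg x
  linarith

lemma cos_quart {x : ℝ} (hx : |x| ≤ 1) : |Real.cos x - 1 + x^2/2| ≤ |x|^4*(5/96) := by
  have h := Real.cos_bound hx
  have he : Real.cos x - (1 - x^2/2) = Real.cos x - 1 + x^2/2 := by ring
  rw [← he]
  exact h

lemma sin_half_div_lim : Tendsto (fun ε : ℝ => ε / Real.sin (ε/2)) (nhdsWithin 0 (Set.Ioi 0)) (nhds 2) := by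
  have hd : HasDerivAt Real.sin 1 0 := by simpa using Real.hasDerivAt_sin 0
  have hslope := hasDerivAt_iff_tendsto_slope.mp hd
  have h1 : Tendsto (fun x : ℝ => Real.sin x / x) (nhdsWithin 0 {(0:ℝ)}ᶜ) (nhds 1) := by
    refine hslope.congr' ?_
    filter_upwards [self_mem_nhdsWithin] with x hx
    simp [slope_def_field, div_eq_inv_mul]
  have h2 : Tendsto (fun ε : ℝ => ε/2) (nhdsWithin 0 (Set.Ioi 0)) (nhdsWithin 0 {(0:ℝ)}ᶜ) := by
    apply tendsto_nhdsWithin_of_tendsto_nhds_of_eventually_within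
    · have hbase : Tendsto (fun ε:ℝ => ε/2) (nhds 0) (nhds 0) := by
        simpa using (continuous_id.div_const (2:ℝ)).tendsto 0
      exact hbase.mono_left nhdsWithin_le_nhds
    · filter_upwards [self_mem_nhdsWithin] with x hx
      have hx0 : (0:ℝ) < x := hx
      simp only [Set.mem_compl_iff, Set.mem_singleton_iff]
      positivity
  have h3 : Tendsto (fun ε : ℝ => Real.sin (ε/2) / (ε/2)) (nhdsWithin 0 (Set.Ioi 0)) (nhds 1) :=
    h1.comp h2
  have h4 := (h3.inv₀ (by norm_num)).const_mul (2:ℝ)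
  have h5 : ∀ ε : ℝ, (2:ℝ) * (Real.sin (ε/2) / (ε/2))⁻¹ = ε / Real.sin (ε/2) := by
    intro ε
    rw [inv_div]
    ring
  simp only [h5] at h4
  norm_num at h4
  exact h4

noncomputable def Nf (m : ℕ) (ε : ℝ) : ℝ :=
  ε*Real.sin (m*ε) + m*ε*(Real.cos (m*ε)*Real.sin ε) - 4*m*(1 - Real.cos ε)

lemma tendsto_const_mul_eps (c : ℝ) : Tendsto (fun ε : ℝ => c*ε) (nhdsWithin 0 (Set.Ioi 0)) (nhds 0) := by
  have : Tendsto (fun ε : ℝ => c*ε) (nhds 0) (nhds 0) := by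
    simpa using (continuous_mul_left c).tendsto (0:ℝ)
  exact this.mono_left nhdsWithin_le_nhds

lemma Nf_lim (m : ℕ) : Tendsto (fun ε : ℝ => Nf m ε / ε^3) (nhdsWithin 0 (Set.Ioi 0)) (nhds 0) := by
  have hδ : (0:ℝ) < 1/(m+1) := by positivity
  have hmem : Set.Ioo (0:ℝ) (1/(m+1)) ∈ nhdsWithin (0:ℝ) (Set.Ioi 0) :=
    Ioo_mem_nhdsGT_of_mem ⟨le_refl 0, hδ⟩
  have hbnd : ∀ ε ∈ Set.Ioo (0:ℝ) (1/(m+1)),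
      |ε| ≤ 1 ∧ |(m:ℝ)*ε| ≤ 1 ∧ 0 < ε := by
    intro ε hε
    obtain ⟨h1, h2⟩ := hε
    have hm1 : (0:ℝ) < (m:ℝ)+1 := by positivity
    have hε1 : ε ≤ 1 := by
      have : (1:ℝ)/(m+1) ≤ 1 := by
        rw [div_le_one hm1]; linarith [Nat.cast_nonneg (α := ℝ) m]
      linarith
    constructor
    · rw [abs_of_pos h1]; exact hε1
    constructor
    · rw [_root_.abs_of_nonneg (show (0:ℝ) ≤ (m:ℝ)*ε by positivity)]
      calc (m:ℝ)*ε ≤ (m:ℝ)*(1/(m+1)) := by gcongr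
      _ ≤ 1 := by rw [mul_one_div, div_le_one hm1]; linarith
    · exact h1
  -- four pieces
  have T1 : Tendsto (fun ε : ℝ => (Real.sin (m*ε) - m*ε)/ε^2) (nhdsWithin 0 (Set.Ioi 0)) (nhds 0) := by
    apply squeeze_zero_norm' (a := fun ε => (m:ℝ)^3*ε)
    · filter_upwards [hmem] with ε hε
      obtain ⟨hε1, hmε, hεpos⟩ := hbnd ε hε
      rw [Real.norm_eq_abs, abs_div, _root_.abs_pow, _root_.abs_of_pos hεpos]
      rw [div_le_iff₀ (by positivity)]
      calc |Real.sin (m*ε) - m*ε| ≤ |(m:ℝ)*ε|^3 := sin_lin hmε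
      _ = (m:ℝ)^3*ε^3 := by
          rw [abs_mul, _root_.abs_of_pos hεpos, Nat.abs_cast, mul_pow]
      _ = (m:ℝ)^3*ε*ε^2 := by ring
    · exact tendsto_const_mul_eps _
  have T2 : Tendsto (fun ε : ℝ => (m:ℝ)*((Real.cos (m*ε) - 1)*Real.sin ε)/ε^2) (nhdsWithin 0 (Set.Ioi 0)) (nhds 0) := by
    apply squeeze_zero_norm' (a := fun ε => (m:ℝ)^3*ε)
    · filter_upwards [hmem] with ε hε
      obtain ⟨hε1, hmε, hεpos⟩ := hbnd ε hε
      rw [Real.norm_eq_abs, abs_div, _root_.abs_pow, _root_.abs_of_pos hεpos]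
      rw [div_le_iff₀ (by positivity)]
      have hc : |Real.cos ((m:ℝ)*ε) - 1| ≤ ((m:ℝ)*ε)^2 := cos_lin hmε
      have hsle : |Real.sin ε| ≤ ε := by
        have := Real.abs_sin_le_abs (x := ε)
        rwa [_root_.abs_of_pos hεpos] at this
      calc |(m:ℝ)*((Real.cos (m*ε) - 1)*Real.sin ε)|
          = (m:ℝ)*(|Real.cos (m*ε) - 1| * |Real.sin ε|) := by
            rw [abs_mul, abs_mul, Nat.abs_cast]
      _ ≤ (m:ℝ)*(((m:ℝ)*ε)^2*ε) := by
            gcongr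
      _ = (m:ℝ)^3*ε*ε^2 := by ring
    · exact tendsto_const_mul_eps _
  have T3 : Tendsto (fun ε : ℝ => (m:ℝ)*(Real.sin ε - ε)/ε^2) (nhdsWithin 0 (Set.Ioi 0)) (nhds 0) := by
    apply squeeze_zero_norm' (a := fun ε => (m:ℝ)*ε)
    · filter_upwards [hmem] with ε hε
      obtain ⟨hε1, hmε, hεpos⟩ := hbnd ε hε
      rw [Real.norm_eq_abs, abs_div, _root_.abs_pow, _root_.abs_of_pos hεpos]
      rw [div_le_iff₀ (by positivity)]
      calc |(m:ℝ)*(Real.sin ε - ε)| = (m:ℝ)*|Real.sin ε - ε| := by rw [abs_mul, Nat.abs_cast]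
      _ ≤ (m:ℝ)*|ε|^3 := by gcongr; exact sin_lin hε1
      _ = (m:ℝ)*ε*ε^2 := by rw [_root_.abs_of_pos hεpos]; ring
    · exact tendsto_const_mul_eps _
  have T4 : Tendsto (fun ε : ℝ => 4*(m:ℝ)*(1 - Real.cos ε - ε^2/2)/ε^3) (nhdsWithin 0 (Set.Ioi 0)) (nhds 0) := by
    apply squeeze_zero_norm' (a := fun ε => 4*(m:ℝ)*ε)
    · filter_upwards [hmem] with ε hε
      obtain ⟨hε1, hmε, hεpos⟩ := hbnd ε hε
      rw [Real.norm_eq_abs, abs_div, _root_.abs_pow, _root_.abs_of_pos hεpos]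
      rw [div_le_iff₀ (by positivity)]
      have hq : |Real.cos ε - 1 + ε^2/2| ≤ |ε|^4*(5/96) := cos_quart hε1
      calc |4*(m:ℝ)*(1 - Real.cos ε - ε^2/2)| = 4*(m:ℝ)*|Real.cos ε - 1 + ε^2/2| := by
            rw [abs_mul, abs_mul]
            rw [show |(4:ℝ)| = 4 by norm_num, Nat.abs_cast]
            rw [show (1 - Real.cos ε - ε^2/2) = -(Real.cos ε - 1 + ε^2/2) by ring, abs_neg]
      _ ≤ 4*(m:ℝ)*(|ε|^4*(5/96)) := by gcongr
      _ ≤ 4*(m:ℝ)*ε*ε^3 := by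
            rw [_root_.abs_of_pos hεpos]
            have : ε^4*(5/96) ≤ ε*ε^3 := by nlinarith [pow_nonneg hεpos.le 3, pow_nonneg hεpos.le 4]
            calc 4*(m:ℝ)*(ε^4*(5/96)) ≤ 4*(m:ℝ)*(ε*ε^3) := by gcongr
            _ = 4*(m:ℝ)*ε*ε^3 := by ring
    · exact tendsto_const_mul_eps _
  have hsum := ((T1.add T2).add T3).sub T4
  rw [show (0:ℝ) + 0 + 0 - 0 = 0 by norm_num] at hsum
  refine hsum.congr' ?_
  filter_upwards [hmem] with ε hε
  obtain ⟨hε1, hmε, hεpos⟩ := hbnd ε hε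
  have hεne : ε ≠ 0 := ne_of_gt hεpos
  unfold Nf
  field_simp
  ring

lemma rho_lim (m : ℕ) : Tendsto (fun ε : ℝ =>
    Real.sin (m*ε)/Real.sin (ε/2)^2 + 2*m*(Real.cos (m*ε)*Real.cos (ε/2))/Real.sin (ε/2) - 8*m/ε)
    (nhdsWithin 0 (Set.Ioi 0)) (nhds 0) := by
  have hmul := (Nf_lim m).mul (sin_half_div_lim.pow 2)
  rw [show (0:ℝ)*2^2 = 0 by norm_num] at hmul
  refine hmul.congr' ?_
  filter_upwards [Ioo_mem_nhdsGT_of_mem (Set.mem_Ico.mpr ⟨le_refl (0:ℝ), Real.pi_pos⟩)] with ε hε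
  obtain ⟨hεpos, hεπ⟩ := hε
  have hS : Real.sin (ε/2) ≠ 0 := by
    have : 0 < Real.sin (ε/2) := Real.sin_pos_of_pos_of_lt_pi (by linarith) (by linarith [Real.pi_pos])
    exact ne_of_gt this
  have hεne : ε ≠ 0 := ne_of_gt hεpos
  have h2CS : Real.sin ε = 2*Real.sin (ε/2)*Real.cos (ε/2) := by
    have := Real.sin_two_mul (ε/2); rw [show 2*(ε/2) = ε by ring] at this; linarith
  have h2S2 : Real.cos ε = 1 - 2*Real.sin (ε/2)^2 := by
    have h1 := Real.cos_two_mul (ε/2)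
    rw [show 2*(ε/2) = ε by ring] at h1
    nlinarith [Real.sin_sq_add_cos_sq (ε/2)]
  unfold Nf
  rw [h2CS, h2S2]
  field_simp
  ring

lemma expReal (x : ℝ) : Complex.exp ((x:ℂ)*Complex.I)
    = ↑(Real.cos x) + ↑(Real.sin x)*Complex.I := by
  rw [Complex.exp_mul_I, ← Complex.ofReal_cos, ← Complex.ofReal_sin]

noncomputable def Rf (m : ℕ) (ε : ℝ) : ℂ :=
  -((2*(m:ℂ)) * (Complex.exp (Complex.I*m*((-ε:ℝ):ℂ)) - Complex.exp (Complex.I*m*((ε:ℝ):ℂ))))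
  - (2*(m:ℂ)^2*Complex.I) * (((-ε:ℝ):ℂ) - ((ε:ℝ):ℂ))
  - (4*(m:ℂ)^2) * ((∑ k ∈ Finset.Ico 1 m, Complex.exp (Complex.I*((-ε:ℝ):ℂ))^k/(k:ℂ))
      - ∑ k ∈ Finset.Ico 1 m, Complex.exp (Complex.I*((ε:ℝ):ℂ))^k/(k:ℂ))

lemma Rf_cont (m : ℕ) : Continuous (Rf m) := by
  unfold Rf
  apply Continuous.sub
  apply Continuous.sub
  · apply Continuous.neg
    apply Continuous.mul continuous_const
    apply Continuous.sub <;>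
    · apply Complex.continuous_exp.comp
      apply Continuous.mul continuous_const
      exact Complex.continuous_ofReal.comp (by continuity)
  · apply Continuous.mul continuous_const
    apply Continuous.sub <;>
    · exact Complex.continuous_ofReal.comp (by continuity)
  · apply Continuous.mul continuous_const
    apply Continuous.sub <;>
    · apply continuous_finset_sum
      intro k _
      apply Continuous.div_const
      apply Continuous.pow
      apply Complex.continuous_exp.comp
      apply Continuous.mul continuous_const
      exact Complex.continuous_ofReal.comp (by continuity)

lemma Rf_zero (m : ℕ) : Rf m 0 = 0 := by
  unfold Rf
  norm_num

lemma Hf_lim (m : ℕ) : Tendsto (fun ε : ℝ => Hf m (-ε) - Hf m ε - 16*Complex.I*m/(ε:ℂ))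
    (nhdsWithin 0 (Set.Ioi 0)) (nhds 0) := by
  have h2I : Tendsto (fun ε : ℝ => 2*Complex.I*((Real.sin (m*ε)/Real.sin (ε/2)^2
      + 2*m*(Real.cos (m*ε)*Real.cos (ε/2))/Real.sin (ε/2) - 8*m/ε : ℝ):ℂ))
      (nhdsWithin 0 (Set.Ioi 0)) (nhds 0) := by
    have := ((Complex.continuous_ofReal.tendsto 0).comp (rho_lim m)).const_mul (2*Complex.I)
    simpa using this
  have hR : Tendsto (Rf m) (nhdsWithin 0 (Set.Ioi 0)) (nhds 0) := by
    have := ((Rf_cont m).tendsto 0).mono_left (nhdsWithin_le_nhds (s := Set.Ioi (0:ℝ)))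
    rwa [Rf_zero] at this
  have hsum := h2I.add hR
  rw [add_zero] at hsum
  refine hsum.congr' ?_
  filter_upwards [Ioo_mem_nhdsGT_of_mem (Set.mem_Ico.mpr ⟨le_refl (0:ℝ), Real.pi_pos⟩)] with ε hε
  obtain ⟨hεpos, hεπ⟩ := hε
  have hSpos : 0 < Real.sin (ε/2) :=
    Real.sin_pos_of_pos_of_lt_pi (by linarith) (by linarith [Real.pi_pos])
  have hS : Real.sin (ε/2) ≠ 0 := ne_of_gt hSpos
  have hsC : (Real.sin (ε/2) : ℂ) ≠ 0 := by exact_mod_cast hS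
  have hεne : ε ≠ 0 := ne_of_gt hεpos
  have hεC : (ε:ℂ) ≠ 0 := by exact_mod_cast hεne
  have hsneg : Real.sin ((-ε)/2) = -Real.sin (ε/2) := by
    rw [show (-ε)/2 = -(ε/2) by ring, Real.sin_neg]
  have hcneg : Real.cos ((-ε)/2) = Real.cos (ε/2) := by
    rw [show (-ε)/2 = -(ε/2) by ring, Real.cos_neg]
  have hlogneg : Real.log (Real.sin ((-ε)/2)) = Real.log (Real.sin (ε/2)) := by
    rw [hsneg, Real.log_neg_eq_log]
  have hem : Complex.exp (Complex.I*(m:ℂ)*((-ε:ℝ):ℂ))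
      = ↑(Real.cos (m*ε)) - ↑(Real.sin (m*ε))*Complex.I := by
    rw [show Complex.I*(m:ℂ)*((-ε:ℝ):ℂ) = ((-(m*ε):ℝ):ℂ)*Complex.I by push_cast; ring, expReal]
    rw [Real.cos_neg, Real.sin_neg]
    push_cast
    ring
  have hep : Complex.exp (Complex.I*(m:ℂ)*((ε:ℝ):ℂ))
      = ↑(Real.cos (m*ε)) + ↑(Real.sin (m*ε))*Complex.I := by
    rw [show Complex.I*(m:ℂ)*((ε:ℝ):ℂ) = (((m*ε):ℝ):ℂ)*Complex.I by push_cast; ring, expReal]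
  symm
  unfold Hf Rf
  rw [hlogneg, hem, hep]
  rw [show ((Real.sin ((-ε)/2) : ℝ):ℂ) = -(Real.sin (ε/2):ℂ) by rw [hsneg]; push_cast; ring]
  rw [show ((Real.cos ((-ε)/2) : ℝ):ℂ) = (Real.cos (ε/2):ℂ) by rw [hcneg]]
  push_cast
  field_simp
  ring

lemma main_nat (m : ℕ) (t : ℝ) (ht : t ∈ Set.Ioo (-π) π) :
    Tendsto (fun ε : ℝ =>
        (∫ x in Set.Icc (-π) π \ Set.Ioo (t - ε) (t + ε),
            ((Real.cos ((x - t) / 2) / Real.sin ((x - t) / 2) ^ 3 : ℝ) : ℂ) *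
              Complex.exp (Complex.I * (m:ℂ) * x))
          - 16 * Complex.I * (m:ℂ) * Complex.exp (Complex.I * (m:ℂ) * t) / (ε : ℂ))
      (nhdsWithin 0 (Set.Ioi 0))
      (nhds (-4 * (π:ℂ) * Complex.I * (m:ℂ) ^ 2 * Complex.exp (Complex.I * (m:ℂ) * t))) := by
  obtain ⟨ht1, ht2⟩ := ht
  set F : ℝ → ℂ := fun x => ((Real.cos ((x - t) / 2) / Real.sin ((x - t) / 2) ^ 3 : ℝ) : ℂ) *
      Complex.exp (Complex.I * (m:ℂ) * x) with hF
  set P : ℝ → ℂ := fun x => Complex.exp (Complex.I * (m:ℂ) * t) * Hf m (x - t) with hP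
  -- derivative of P
  have hPd : ∀ x : ℝ, Real.sin ((x - t)/2) ≠ 0 → HasDerivAt P (F x) x := by
    intro x hsx
    have hH := hasDerivAt_Hf m hsx
    have hin : HasDerivAt (fun x : ℝ => x - t) 1 x := (hasDerivAt_id x).sub_const t
    have hstep : HasDerivAt (fun x:ℝ => Hf m (x - t))
        ((Real.cos ((x - t)/2):ℂ)/(Real.sin ((x - t)/2):ℂ)^3
          * Complex.exp (Complex.I*(m:ℂ)*((x - t:ℝ):ℂ))) x := by
      have h' := HasDerivAt.scomp x hH hin
      exact h'.congr_deriv (by simp)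
    have hcomp := hstep.const_mul (Complex.exp (Complex.I * (m:ℂ) * t))
    have harg : Complex.exp (Complex.I*(m:ℂ)*t) * Complex.exp (Complex.I*(m:ℂ)*((x - t:ℝ):ℂ))
        = Complex.exp (Complex.I*(m:ℂ)*x) := by
      rw [← Complex.exp_add]
      congr 1
      push_cast
      ring
    have : Complex.exp (Complex.I*(m:ℂ)*t) *
        ((Real.cos ((x - t)/2):ℂ) / (Real.sin ((x - t)/2):ℂ)^3 *
          Complex.exp (Complex.I*(m:ℂ)*((x - t:ℝ):ℂ))) = F x := by
      rw [hF]
      push_cast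
      rw [← harg]
      push_cast
      ring
    rw [← this]
    exact hcomp
  -- continuity of F
  have hFc : ∀ x : ℝ, Real.sin ((x - t)/2) ≠ 0 → ContinuousAt F x := by
    intro x hsx
    rw [hF]
    apply ContinuousAt.mul
    · apply Complex.continuous_ofReal.continuousAt.comp
      apply ContinuousAt.div
      · exact (Real.continuous_cos.comp (by continuity)).continuousAt
      · exact ((Real.continuous_sin.comp (by continuity)).pow 3).continuousAt
      · exact pow_ne_zero 3 hsx
    · exact (Complex.continuous_exp.comp (by continuity)).continuousAt
  have hδ : 0 < min (π - t) (t + π) := by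
    apply lt_min <;> linarith
  -- the limit function
  have hg : Tendsto (fun ε : ℝ => Complex.exp (Complex.I*(m:ℂ)*t) * (-4*(π:ℂ)*Complex.I*(m:ℂ)^2)
      + Complex.exp (Complex.I*(m:ℂ)*t) * (Hf m (-ε) - Hf m ε - 16*Complex.I*(m:ℂ)/(ε:ℂ)))
      (nhdsWithin 0 (Set.Ioi 0))
      (nhds (-4 * (π:ℂ) * Complex.I * (m:ℂ)^2 * Complex.exp (Complex.I * (m:ℂ) * t))) := by
    have hconst : Tendsto (fun _ : ℝ => Complex.exp (Complex.I*(m:ℂ)*t) * (-4*(π:ℂ)*Complex.I*(m:ℂ)^2))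
        (nhdsWithin (0:ℝ) (Set.Ioi 0))
        (nhds (Complex.exp (Complex.I*(m:ℂ)*t) * (-4*(π:ℂ)*Complex.I*(m:ℂ)^2))) :=
      tendsto_const_nhds
    have := hconst.add ((Hf_lim m).const_mul (Complex.exp (Complex.I*(m:ℂ)*t)))
    rw [mul_zero, add_zero] at this
    convert this using 2
    ring
  refine hg.congr' ?_
  filter_upwards [Ioo_mem_nhdsGT_of_mem (Set.mem_Ico.mpr ⟨le_refl (0:ℝ), hδ⟩)] with ε hε
  obtain ⟨hεpos, hεδ⟩ := hε
  have hε1 : ε < π - t := lt_of_lt_of_le hεδ (min_le_left _ _)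
  have hε2 : ε < t + π := lt_of_lt_of_le hεδ (min_le_right _ _)
  -- nonvanishing of sin on the left and right intervals
  have hneL : ∀ x ∈ Set.Icc (-π) (t - ε), Real.sin ((x - t)/2) ≠ 0 := by
    intro x hx
    obtain ⟨hx1, hx2⟩ := hx
    have h1 : -π < (x - t)/2 := by linarith [Real.pi_pos]
    have h2 : (x - t)/2 < 0 := by linarith
    have := Real.sin_neg_of_neg_of_neg_pi_lt h2 h1
    linarith
  have hneR : ∀ x ∈ Set.Icc (t + ε) π, Real.sin ((x - t)/2) ≠ 0 := by
    intro x hx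
    obtain ⟨hx1, hx2⟩ := hx
    have h1 : 0 < (x - t)/2 := by linarith
    have h2 : (x - t)/2 < π := by linarith [Real.pi_pos]
    have := Real.sin_pos_of_pos_of_lt_pi h1 h2
    linarith
  -- set decomposition
  have hset : Set.Icc (-π) π \ Set.Ioo (t - ε) (t + ε)
      = Set.Icc (-π) (t - ε) ∪ Set.Icc (t + ε) π := by
    ext x
    simp only [Set.mem_diff, Set.mem_Icc, Set.mem_Ioo, Set.mem_union, not_and, not_lt]
    constructor
    · rintro ⟨⟨hx1, hx2⟩, hx3⟩
      rcases le_or_gt x (t - ε) with h | h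
      · exact Or.inl ⟨hx1, h⟩
      · exact Or.inr ⟨hx3 h, hx2⟩
    · rintro (⟨h1, h2⟩ | ⟨h1, h2⟩)
      · exact ⟨⟨h1, by linarith⟩, fun h => by linarith⟩
      · exact ⟨⟨by linarith, h2⟩, fun h => by linarith⟩
  have hIL : IntegrableOn F (Set.Icc (-π) (t - ε)) volume := by
    apply ContinuousOn.integrableOn_Icc
    intro x hx
    exact (hFc x (hneL x hx)).continuousWithinAt
  have hIR : IntegrableOn F (Set.Icc (t + ε) π) volume := by
    apply ContinuousOn.integrableOn_Icc
    intro x hx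
    exact (hFc x (hneR x hx)).continuousWithinAt
  have hdisj : Disjoint (Set.Icc (-π) (t - ε)) (Set.Icc (t + ε) π) := by
    apply Set.disjoint_left.mpr
    rintro x ⟨hx1, hx2⟩ ⟨hx3, hx4⟩
    linarith
  have hsplit : ∫ x in Set.Icc (-π) π \ Set.Ioo (t - ε) (t + ε), F x
      = (∫ x in Set.Icc (-π) (t - ε), F x) + ∫ x in Set.Icc (t + ε) π, F x := by
    rw [hset]
    exact MeasureTheory.setIntegral_union hdisj measurableSet_Icc hIL hIR
  -- FTC on the two intervals
  have hLa : -π ≤ t - ε := by linarith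
  have hRa : t + ε ≤ π := by linarith
  have hFTCL : ∫ x in Set.Icc (-π) (t - ε), F x = P (t - ε) - P (-π) := by
    rw [MeasureTheory.integral_Icc_eq_integral_Ioc, ← intervalIntegral.integral_of_le hLa]
    apply intervalIntegral.integral_eq_sub_of_hasDerivAt
    · intro x hx
      rw [Set.uIcc_of_le hLa] at hx
      exact hPd x (hneL x hx)
    · apply ContinuousOn.intervalIntegrable
      rw [Set.uIcc_of_le hLa]
      intro x hx
      exact (hFc x (hneL x hx)).continuousWithinAt
  have hFTCR : ∫ x in Set.Icc (t + ε) π, F x = P π - P (t + ε) := by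
    rw [MeasureTheory.integral_Icc_eq_integral_Ioc, ← intervalIntegral.integral_of_le hRa]
    apply intervalIntegral.integral_eq_sub_of_hasDerivAt
    · intro x hx
      rw [Set.uIcc_of_le hRa] at hx
      exact hPd x (hneR x hx)
    · apply ContinuousOn.intervalIntegrable
      rw [Set.uIcc_of_le hRa]
      intro x hx
      exact (hFc x (hneR x hx)).continuousWithinAt
  -- assemble
  show Complex.exp (Complex.I*(m:ℂ)*t) * (-4*(π:ℂ)*Complex.I*(m:ℂ)^2)
      + Complex.exp (Complex.I*(m:ℂ)*t) * (Hf m (-ε) - Hf m ε - 16*Complex.I*(m:ℂ)/(ε:ℂ))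
      = (∫ x in Set.Icc (-π) π \ Set.Ioo (t - ε) (t + ε), F x)
        - 16 * Complex.I * (m:ℂ) * Complex.exp (Complex.I * (m:ℂ) * t) / (ε : ℂ)
  rw [hsplit, hFTCL, hFTCR, hP]
  simp only [show t - ε - t = -ε by ring, show t + ε - t = ε by ring,
    show (-π : ℝ) - t = -π - t by ring, show (π : ℝ) - t = π - t by ring]
  have heval := Hf_eval m ht1 ht2
  linear_combination (-(Complex.exp (Complex.I*(m:ℂ)*t))) * heval

theorem stmt_16 (m : ℤ) (t : ℝ) (ht : t ∈ Set.Ioo (-π) π) :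
    Tendsto (fun ε : ℝ =>
        (∫ x in Set.Icc (-π) π \ Set.Ioo (t - ε) (t + ε),
            ((Real.cos ((x - t) / 2) / Real.sin ((x - t) / 2) ^ 3 : ℝ) : ℂ) *
              Complex.exp (Complex.I * m * x))
          - 16 * Complex.I * m * Complex.exp (Complex.I * m * t) / (ε : ℂ))
      (nhdsWithin 0 (Set.Ioi 0))
      (nhds (-(Int.sign m : ℂ) * 4 * π * Complex.I * (m : ℂ) ^ 2 *
        Complex.exp (Complex.I * m * t))) := by
  rcases le_or_gt 0 m with hm | hm
  · -- nonnegative case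
    set n := m.toNat with hn
    have hmn : (n : ℤ) = m := Int.toNat_of_nonneg hm
    have hc : ((n:ℕ):ℂ) = (m:ℂ) := by exact_mod_cast congrArg (Int.cast : ℤ → ℂ) hmn
    have H := main_nat n t ht
    rw [hc] at H
    have hval : (-(Int.sign m : ℂ) * 4 * π * Complex.I * (m:ℂ)^2 *
        Complex.exp (Complex.I*(m:ℂ)*t))
        = -4 * (π:ℂ) * Complex.I * (m:ℂ)^2 * Complex.exp (Complex.I*(m:ℂ)*t) := by
      rcases lt_or_eq_of_le hm with h0 | h0
      · rw [Int.sign_eq_one_of_pos h0]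
        push_cast
        ring
      · rw [← h0]
        simp
    rw [hval]
    exact H
  · -- negative case
    set n := (-m).toNat with hn
    have hmn : (n : ℤ) = -m := Int.toNat_of_nonneg (by omega)
    have hc : ((n:ℕ):ℂ) = -(m:ℂ) := by exact_mod_cast congrArg (Int.cast : ℤ → ℂ) hmn
    have H := main_nat n t ht
    have H2 := (Complex.continuous_conj.tendsto _).comp H
    have hargx : ∀ x : ℝ, (starRingEnd ℂ) (Complex.I*(n:ℂ)*(x:ℂ)) = Complex.I*(m:ℂ)*(x:ℂ) := by
      intro x
      rw [map_mul, map_mul, Complex.conj_I, map_natCast, Complex.conj_ofReal, hc]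
      ring
    have hexp : (starRingEnd ℂ) (Complex.exp (Complex.I*(n:ℂ)*(t:ℂ)))
        = Complex.exp (Complex.I*(m:ℂ)*(t:ℂ)) := by
      rw [← Complex.exp_conj, hargx]
    have hfun : ∀ ε : ℝ, (starRingEnd ℂ)
        ((∫ x in Set.Icc (-π) π \ Set.Ioo (t - ε) (t + ε),
            ((Real.cos ((x - t) / 2) / Real.sin ((x - t) / 2) ^ 3 : ℝ) : ℂ) *
              Complex.exp (Complex.I * (n:ℂ) * x))
          - 16 * Complex.I * (n:ℂ) * Complex.exp (Complex.I * (n:ℂ) * t) / (ε : ℂ))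
        = (∫ x in Set.Icc (-π) π \ Set.Ioo (t - ε) (t + ε),
            ((Real.cos ((x - t) / 2) / Real.sin ((x - t) / 2) ^ 3 : ℝ) : ℂ) *
              Complex.exp (Complex.I * (m:ℂ) * x))
          - 16 * Complex.I * (m:ℂ) * Complex.exp (Complex.I * (m:ℂ) * t) / (ε : ℂ) := by
      intro ε
      rw [map_sub]
      congr 1
      · rw [← integral_conj]
        apply MeasureTheory.integral_congr_ae
        filter_upwards [] with x
        rw [map_mul, Complex.conj_ofReal, ← Complex.exp_conj, hargx]
      · rw [map_div₀, map_mul, hexp, map_mul, map_mul, map_ofNat, Complex.conj_I,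
          map_natCast, Complex.conj_ofReal, hc]
        ring
    have hlimval : (starRingEnd ℂ) (-4 * (π:ℂ) * Complex.I * (n:ℂ)^2 *
        Complex.exp (Complex.I * (n:ℂ) * t))
        = -(Int.sign m : ℂ) * 4 * π * Complex.I * (m : ℂ) ^ 2 *
          Complex.exp (Complex.I * (m:ℂ) * t) := by
      rw [map_mul, hexp, map_mul, map_pow, map_natCast, map_mul, Complex.conj_I,
        map_mul, map_neg, map_ofNat, Complex.conj_ofReal, hc, Int.sign_eq_neg_one_of_neg hm]
      push_cast
      ring
    rw [← hlimval]
    exact H2.congr hfun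
end
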